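/- arXiv:2411.11747 — 3 statements merged into one kernel-verified Lean document; each statement's English description precedes it below -/
import Mathlib

section
/- Let f:ℝ^d→ℝ be L-smooth and Σ∈ℝ^{d×d} be symmetric and invertible. Then for every x∈ℝ^d, |f_Σ(x) − f(x)| ≤ (L·d/4)·‖Σ‖². -/
open MeasureTheory Filter Matrix
open Real Set

noncomputable section

abbrev Vec (d : ℕ) := EuclideanSpace ℝ (Fin d)

/-- Action of a `d × d` matrix on a vector in `ℝ^d`. -/
def mApp {d : ℕ} (S : Matrix (Fin d) (Fin d) ℝ) (u : Vec d) : Vec d :=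
  Matrix.toEuclideanLin S u

/-- Anisotropic Gaussian smoothing of `f` by the matrix `S`:
`f_S(x) = π^{-d/2} ∫ f(x + S u) e^{-‖u‖²} du`. -/
def gsmooth {d : ℕ} (f : Vec d → ℝ) (S : Matrix (Fin d) (Fin d) ℝ) (x : Vec d) : ℝ :=
  (Real.pi ^ ((d : ℝ) / 2))⁻¹ * ∫ u : Vec d, f (x + mApp S u) * Real.exp (-‖u‖ ^ 2)

/-- Operator (spectral) norm of a matrix, acting on Euclidean space. -/
def opNorm {d : ℕ} (S : Matrix (Fin d) (Fin d) ℝ) : ℝ :=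
  ‖LinearMap.toContinuousLinearMap (Matrix.toEuclideanLin S)‖

-- 1D integrability
lemma int1d_0 : Integrable (fun t : ℝ => Real.exp (-t ^ 2)) := by
  simpa using integrable_exp_neg_mul_sq (one_pos)

lemma int1d_2 : Integrable (fun t : ℝ => t ^ 2 * Real.exp (-t ^ 2)) := by
  have := integrable_rpow_mul_exp_neg_mul_sq (one_pos) (s := 2) (by norm_num)
  simpa [Real.rpow_natCast] using this

-- limit of t * exp (-t^2) at infinity
lemma tendsto_aux : Tendsto (fun t : ℝ => t * Real.exp (-t ^ 2)) atTop (nhds 0) := by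
  have hz : Tendsto (fun x : ℝ => Real.exp (-(1/2) * x)) atTop (nhds 0) := by
    have : Tendsto (fun x : ℝ => (1/2) * x) atTop atTop :=
      (tendsto_id.const_mul_atTop (by norm_num))
    have h2 := (Real.tendsto_exp_neg_atTop_nhds_zero).comp this
    refine h2.congr (fun x => ?_)
    simp [Function.comp]
  have h := (rpow_mul_exp_neg_mul_sq_isLittleO_exp_neg (one_pos) 1).isBigO.trans_tendsto hz
  refine h.congr' ?_
  filter_upwards [eventually_gt_atTop (0:ℝ)] with t ht
  rw [Real.rpow_one]
  ring_nf

lemma integral_Ioi_sq_gauss : ∫ t in Ioi (0:ℝ), t ^ 2 * Real.exp (-t ^ 2) = Real.sqrt π / 4 := by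
  have hderiv : ∀ t ∈ Ioi (0:ℝ), HasDerivAt (fun t : ℝ => -(t * Real.exp (-t ^ 2)) / 2)
      (t ^ 2 * Real.exp (-t ^ 2) - Real.exp (-t ^ 2) / 2) t := by
    intro t _
    have h1 : HasDerivAt (fun t : ℝ => Real.exp (-t ^ 2)) (-(2*t) * Real.exp (-t^2)) t := by
      have hx : HasDerivAt (fun t : ℝ => -t ^ 2) (-(2*t)) t := by
        simpa using ((hasDerivAt_pow 2 t).fun_neg)
      have := hx.exp
      convert this using 1
      ring
    have h2 := ((hasDerivAt_id t).fun_mul h1)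
    have h3 := (h2.fun_neg).div_const 2
    refine h3.congr_deriv ?_
    simp only [id]
    ring
  have hint : IntegrableOn (fun t : ℝ => t ^ 2 * Real.exp (-t ^ 2) - Real.exp (-t ^ 2) / 2)
      (Ioi (0:ℝ)) := ((int1d_2.sub (int1d_0.div_const 2)).restrict)
  have hlim : Tendsto (fun t : ℝ => -(t * Real.exp (-t ^ 2)) / 2) atTop (nhds 0) := by
    have := (tendsto_aux.neg).div_const 2
    simpa using this
  have hcont : ContinuousWithinAt (fun t : ℝ => -(t * Real.exp (-t ^ 2)) / 2) (Ici 0) 0 := by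
    apply Continuous.continuousWithinAt
    continuity
  have := MeasureTheory.integral_Ioi_of_hasDerivAt_of_tendsto hcont hderiv hint hlim
  -- this : ∫ x in Ioi 0, (x^2 * exp(-x^2) - exp(-x^2)/2) = 0 - (-(0 * exp 0)/2)
  have hsplit : ∫ t in Ioi (0:ℝ), (t ^ 2 * Real.exp (-t ^ 2) - Real.exp (-t ^ 2) / 2)
      = (∫ t in Ioi (0:ℝ), t ^ 2 * Real.exp (-t ^ 2)) - ∫ t in Ioi (0:ℝ), Real.exp (-t ^ 2) / 2 := by
    exact integral_sub (int1d_2.restrict) ((int1d_0.div_const 2).restrict)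
  have hg : ∫ t in Ioi (0:ℝ), Real.exp (-t ^ 2) / 2 = Real.sqrt π / 4 := by
    rw [integral_div]
    have : ∫ t in Ioi (0:ℝ), Real.exp (-t ^ 2) = Real.sqrt π / 2 := by
      simpa using integral_gaussian_Ioi 1
    rw [this]; ring
  rw [hsplit, hg] at this
  simp at this
  linarith

lemma integral_line_sq_gauss : ∫ t : ℝ, t ^ 2 * Real.exp (-t ^ 2) = Real.sqrt π / 2 := by
  have h := intervalIntegral.integral_Iic_add_Ioi (b := (0:ℝ)) int1d_2.integrableOn int1d_2.integrableOn
  have hneg : ∫ t in Iic (0:ℝ), t ^ 2 * Real.exp (-t ^ 2)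
      = ∫ t in Ioi (0:ℝ), t ^ 2 * Real.exp (-t ^ 2) := by
    have h2 := integral_comp_neg_Iic (0:ℝ) (fun t => t ^ 2 * Real.exp (-t ^ 2))
    simp only [neg_zero, neg_sq, even_two, Even.neg_pow] at h2
    exact h2
  rw [hneg, integral_Ioi_sq_gauss] at h
  rw [← h]; ring

lemma integral_line_gauss : ∫ t : ℝ, Real.exp (-t ^ 2) = Real.sqrt π := by
  simpa using integral_gaussian 1

lemma integrable_gauss_vec {d : ℕ} {b : ℝ} (hb : 0 < b) :
    Integrable (fun u : Vec d => Real.exp (-b * ‖u‖ ^ 2)) := by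
  have h := (GaussianFourier.integrable_cexp_neg_mul_sq_norm_add (V := Vec d)
      (b := (b : ℂ)) (by simpa using hb) 0 0).norm
  refine h.congr (Filter.Eventually.of_forall fun v => ?_)
  simp only [Complex.norm_exp]
  norm_num
  left
  rw [← Complex.ofReal_pow, Complex.ofReal_re]

lemma integral_gauss_vec (d : ℕ) :
    ∫ u : Vec d, Real.exp (-‖u‖ ^ 2) = π ^ ((d : ℝ) / 2) := by
  have h := GaussianFourier.integral_rexp_neg_mul_sq_norm (V := Vec d) one_pos
  simpa [div_one] using h

lemma integrable_norm_mul_gauss {d : ℕ} :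
    Integrable (fun u : Vec d => ‖u‖ * Real.exp (-‖u‖ ^ 2)) := by
  apply Integrable.mono' ((integrable_gauss_vec (d := d) (b := 1/2) (by norm_num)).const_mul 2)
  · exact (continuous_norm.mul
      ((continuous_norm.pow 2).neg.rexp)).aestronglyMeasurable
  · refine Filter.Eventually.of_forall fun u => ?_
    set t := ‖u‖ with ht
    have ht0 : 0 ≤ t := norm_nonneg u
    have h1 : t ≤ 2 * Real.exp (t ^ 2 / 2) := by
      nlinarith [Real.add_one_le_exp (t ^ 2 / 2), sq_nonneg (t - 1)]
    have e1 : Real.exp (t ^ 2 / 2) * Real.exp (-t ^ 2) = Real.exp (-(1/2) * t ^ 2) := by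
      rw [← Real.exp_add]; ring_nf
    calc ‖t * Real.exp (-t ^ 2)‖ = t * Real.exp (-t ^ 2) := by
          rw [Real.norm_eq_abs, abs_of_nonneg (by positivity)]
      _ ≤ (2 * Real.exp (t ^ 2 / 2)) * Real.exp (-t ^ 2) :=
          mul_le_mul_of_nonneg_right h1 (Real.exp_pos _).le
      _ = 2 * Real.exp (-(1/2) * t ^ 2) := by rw [mul_assoc, e1]

lemma integrable_normsq_mul_gauss {d : ℕ} :
    Integrable (fun u : Vec d => ‖u‖ ^ 2 * Real.exp (-‖u‖ ^ 2)) := by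
  apply Integrable.mono' ((integrable_gauss_vec (d := d) (b := 1/2) (by norm_num)).const_mul 2)
  · exact ((continuous_norm.pow 2).mul
      ((continuous_norm.pow 2).neg.rexp)).aestronglyMeasurable
  · refine Filter.Eventually.of_forall fun u => ?_
    set t := ‖u‖ with ht
    have ht0 : 0 ≤ t := norm_nonneg u
    have h1 : t ^ 2 ≤ 2 * Real.exp (t ^ 2 / 2) := by
      nlinarith [Real.add_one_le_exp (t ^ 2 / 2)]
    have e1 : Real.exp (t ^ 2 / 2) * Real.exp (-t ^ 2) = Real.exp (-(1/2) * t ^ 2) := by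
      rw [← Real.exp_add]; ring_nf
    calc ‖t ^ 2 * Real.exp (-t ^ 2)‖ = t ^ 2 * Real.exp (-t ^ 2) := by
          rw [Real.norm_eq_abs, abs_of_nonneg (by positivity)]
      _ ≤ (2 * Real.exp (t ^ 2 / 2)) * Real.exp (-t ^ 2) :=
          mul_le_mul_of_nonneg_right h1 (Real.exp_pos _).le
      _ = 2 * Real.exp (-(1/2) * t ^ 2) := by rw [mul_assoc, e1]

lemma integral_normsq_gauss (d : ℕ) :
    ∫ u : Vec d, ‖u‖ ^ 2 * Real.exp (-‖u‖ ^ 2) = (d : ℝ) / 2 * π ^ ((d : ℝ) / 2) := by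
  classical
  set g : Fin d → Fin d → ℝ → ℝ :=
    fun i j t => if j = i then t ^ 2 * Real.exp (-t ^ 2) else Real.exp (-t ^ 2) with hg
  have hgint : ∀ i j, Integrable (g i j) := by
    intro i j
    by_cases h : j = i
    · simpa [hg, h] using int1d_2
    · simpa [hg, h] using int1d_0
  have hmp := (EuclideanSpace.volume_preserving_symm_measurableEquiv_toLp (Fin d)).symm
  rw [← hmp.integral_comp (MeasurableEquiv.measurableEmbedding _)]
  have hnorm : ∀ v : Fin d → ℝ,
      ‖(MeasurableEquiv.toLp 2 (Fin d → ℝ)).symm.symm v‖ ^ 2 = ∑ i, (v i) ^ 2 := by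
    intro v
    rw [EuclideanSpace.norm_eq, Real.sq_sqrt (by positivity)]
    simp [sq_abs]
  have hfun : (fun v : Fin d → ℝ =>
      ‖(MeasurableEquiv.toLp 2 (Fin d → ℝ)).symm.symm v‖ ^ 2 *
        Real.exp (-‖(MeasurableEquiv.toLp 2 (Fin d → ℝ)).symm.symm v‖ ^ 2))
      = fun v => ∑ i, ∏ j, g i j (v j) := by
    funext v
    rw [hnorm v, Finset.sum_mul]
    refine Finset.sum_congr rfl fun i _ => ?_
    have hexp : Real.exp (-(∑ j, (v j) ^ 2)) = ∏ j, Real.exp (-(v j) ^ 2) := by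
      rw [← Real.exp_sum]
      congr 1
      rw [← Finset.sum_neg_distrib]
    rw [hexp,
      ← Finset.mul_prod_erase Finset.univ (fun j => Real.exp (-(v j) ^ 2)) (Finset.mem_univ i),
      ← mul_assoc,
      ← Finset.mul_prod_erase Finset.univ (fun j => g i j (v j)) (Finset.mem_univ i)]
    congr 1
    · simp [hg]
    · refine Finset.prod_congr rfl fun j hj => ?_
      simp [hg, Finset.ne_of_mem_erase hj]
  rw [hfun, integral_finset_sum _ (fun i _ => show Integrable _ volume from Integrable.fintype_prod (fun j => hgint i j))]
  have hprod : ∀ i : Fin d, (∫ v : Fin d → ℝ, ∏ j, g i j (v j))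
      = Real.sqrt π / 4 * 2 * Real.sqrt π ^ (d - 1) := by
    intro i
    rw [MeasureTheory.volume_pi, MeasureTheory.integral_fintype_prod_eq_prod (ι := Fin d) (g i),
      ← Finset.mul_prod_erase Finset.univ (fun j => ∫ t, g i j t) (Finset.mem_univ i)]
    have h1 : ∫ t, g i i t = Real.sqrt π / 4 * 2 := by
      simp only [hg, if_true]
      rw [integral_line_sq_gauss]; ring
    have h2 : ∀ j ∈ Finset.univ.erase i, (∫ t, g i j t) = Real.sqrt π := by
      intro j hj
      simp only [hg, if_neg (Finset.ne_of_mem_erase hj)]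
      exact integral_line_gauss
    rw [h1, Finset.prod_congr rfl h2, Finset.prod_const,
      Finset.card_erase_of_mem (Finset.mem_univ i), Finset.card_univ, Fintype.card_fin]
  rw [Finset.sum_congr rfl (fun i _ => hprod i), Finset.sum_const, Finset.card_univ,
    Fintype.card_fin, nsmul_eq_mul]
  -- now a scalar identity
  have hs : Real.sqrt π ^ d = π ^ ((d : ℝ) / 2) := by
    rw [Real.sqrt_eq_rpow, ← Real.rpow_natCast (π ^ ((1:ℝ)/2)) d, ← Real.rpow_mul pi_pos.le]
    congr 1
    ring
  cases d with
  | zero => simp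
  | succ n =>
      rw [← hs, Nat.add_sub_cancel, pow_succ]
      push_cast
      ring

section Taylor
variable {d : ℕ} {f : Vec d → ℝ} {L : ℝ}

lemma grad_cont (hL : ∀ x y : Vec d, ‖gradient f x - gradient f y‖ ≤ L * ‖x - y‖) :
    Continuous (gradient f) := by
  have hlip : LipschitzWith (Real.toNNReal (max L 0)) (gradient f) := by
    apply LipschitzWith.of_dist_le_mul
    intro x y
    rw [dist_eq_norm, dist_eq_norm]
    calc ‖gradient f x - gradient f y‖ ≤ L * ‖x - y‖ := hL x y
      _ ≤ max L 0 * ‖x - y‖ := mul_le_mul_of_nonneg_right (le_max_left _ _) (norm_nonneg _)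
      _ = Real.toNNReal (max L 0) * ‖x - y‖ := by
          rw [Real.coe_toNNReal _ (le_max_right _ _)]
  exact hlip.continuous

lemma line_deriv (hdiff : Differentiable ℝ f) (y w : Vec d) (t : ℝ) :
    HasDerivAt (fun s : ℝ => f (y + s • w))
      (inner ℝ (gradient f (y + t • w)) w : ℝ) t := by
  have hcurve : HasDerivAt (fun s : ℝ => y + s • w) w t := by
    simpa using ((hasDerivAt_id t).smul_const w).const_add y
  have hgrad := (hdiff (y + t • w)).hasGradientAt
  rw [hasGradientAt_iff_hasFDerivAt] at hgrad
  have h := hgrad.comp_hasDerivAt t hcurve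
  simpa [Function.comp_def, InnerProductSpace.toDual_apply_apply] using h

lemma taylor_bound (hdiff : Differentiable ℝ f)
    (hL : ∀ x y : Vec d, ‖gradient f x - gradient f y‖ ≤ L * ‖x - y‖) (y w : Vec d) :
    |f (y + w) - f y - (inner ℝ (gradient f y) w : ℝ)| ≤ L / 2 * ‖w‖ ^ 2 := by
  rcases eq_or_ne w 0 with hw | hw
  · simp [hw]
  have hL0 : 0 ≤ L := by
    have h1 := hL (y + w) y
    have h2 : (0:ℝ) ≤ L * ‖w‖ := le_trans (norm_nonneg _) (by simpa using h1)
    have hw' : 0 < ‖w‖ := norm_pos_iff.mpr hw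
    nlinarith
  have hgc : Continuous fun t : ℝ => (inner ℝ (gradient f (y + t • w)) w : ℝ) := by
    apply Continuous.inner ((grad_cont hL).comp (by continuity)) continuous_const
  have hFTC : ∫ t in (0:ℝ)..1, (inner ℝ (gradient f (y + t • w)) w : ℝ) = f (y + w) - f y := by
    have h := intervalIntegral.integral_eq_sub_of_hasDerivAt
      (f := fun s : ℝ => f (y + s • w)) (a := 0) (b := 1)
      (fun t _ => line_deriv hdiff y w t) (hgc.intervalIntegrable 0 1)
    simpa using h
  have hsplit : f (y + w) - f y - (inner ℝ (gradient f y) w : ℝ)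
      = ∫ t in (0:ℝ)..1,
          ((inner ℝ (gradient f (y + t • w)) w : ℝ) - (inner ℝ (gradient f y) w : ℝ)) := by
    rw [intervalIntegral.integral_sub (hgc.intervalIntegrable 0 1)
      intervalIntegrable_const, hFTC]
    simp
  rw [hsplit, ← Real.norm_eq_abs]
  have hbound := intervalIntegral.norm_integral_le_of_norm_le
    (f := fun t : ℝ =>
      ((inner ℝ (gradient f (y + t • w)) w : ℝ) - (inner ℝ (gradient f y) w : ℝ)))
    (g := fun t : ℝ => (L * ‖w‖ ^ 2) * t) (μ := volume) (a := 0) (b := 1)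
    (by norm_num) ?_ ?_
  · refine le_trans hbound ?_
    rw [intervalIntegral.integral_const_mul, integral_id]
    norm_num
    nlinarith [sq_nonneg ‖w‖]
  · refine Filter.Eventually.of_forall ?_
    intro t ht
    have ht0 : 0 ≤ t := le_of_lt ht.1
    have h1 : ‖gradient f (y + t • w) - gradient f y‖ ≤ L * (t * ‖w‖) := by
      have := hL (y + t • w) y
      simpa [norm_smul, abs_of_nonneg ht0] using this
    calc ‖(inner ℝ (gradient f (y + t • w)) w : ℝ) - (inner ℝ (gradient f y) w : ℝ)‖
        = |(inner ℝ (gradient f (y + t • w) - gradient f y) w : ℝ)| := by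
          rw [inner_sub_left]; rfl
      _ ≤ ‖gradient f (y + t • w) - gradient f y‖ * ‖w‖ := abs_real_inner_le_norm _ _
      _ ≤ (L * (t * ‖w‖)) * ‖w‖ := mul_le_mul_of_nonneg_right h1 (norm_nonneg _)
      _ = (L * ‖w‖ ^ 2) * t := by ring
  · exact (continuous_const.mul continuous_id).intervalIntegrable 0 1

lemma sym_bound (hdiff : Differentiable ℝ f)
    (hL : ∀ x y : Vec d, ‖gradient f x - gradient f y‖ ≤ L * ‖x - y‖) (x v : Vec d) :
    |f (x + v) + f (x - v) - 2 * f x| ≤ L * ‖v‖ ^ 2 := by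
  have h1 := taylor_bound hdiff hL x v
  have h2 := taylor_bound hdiff hL x (-v)
  rw [← sub_eq_add_neg, inner_neg_right, norm_neg] at h2
  calc |f (x + v) + f (x - v) - 2 * f x|
      = |(f (x + v) - f x - (inner ℝ (gradient f x) v : ℝ))
          + (f (x - v) - f x - -(inner ℝ (gradient f x) v : ℝ))| := by ring_nf
    _ ≤ |f (x + v) - f x - (inner ℝ (gradient f x) v : ℝ)|
          + |f (x - v) - f x - -(inner ℝ (gradient f x) v : ℝ)| := abs_add_le _ _
    _ ≤ L / 2 * ‖v‖ ^ 2 + L / 2 * ‖v‖ ^ 2 := add_le_add h1 h2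
    _ = L * ‖v‖ ^ 2 := by ring

lemma growth_bound (hdiff : Differentiable ℝ f)
    (hL : ∀ x y : Vec d, ‖gradient f x - gradient f y‖ ≤ L * ‖x - y‖) (x w : Vec d) :
    |f (x + w)| ≤ |f x| + ‖gradient f x‖ * ‖w‖ + L / 2 * ‖w‖ ^ 2 := by
  have h1 := taylor_bound hdiff hL x w
  have h2 : |(inner ℝ (gradient f x) w : ℝ)| ≤ ‖gradient f x‖ * ‖w‖ := abs_real_inner_le_norm _ _
  calc |f (x + w)| = |(f (x + w) - f x - (inner ℝ (gradient f x) w : ℝ))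
        + f x + (inner ℝ (gradient f x) w : ℝ)| := by ring_nf
    _ ≤ _ := by
        have := abs_add_le (f (x + w) - f x - (inner ℝ (gradient f x) w : ℝ) + f x)
          ((inner ℝ (gradient f x) w : ℝ))
        have h3 := abs_add_le (f (x + w) - f x - (inner ℝ (gradient f x) w : ℝ)) (f x)
        linarith

end Taylor


/-- for `L`-smooth `f`, `|f_Σ(x) − f(x)| ≤ (L d / 4) ‖Σ‖²`. -/
theorem stmt_7 {d : ℕ} (f : Vec d → ℝ) (L : ℝ)
    (hdiff : Differentiable ℝ f)
    (hL : ∀ x y : Vec d, ‖gradient f x - gradient f y‖ ≤ L * ‖x - y‖)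
    (S : Matrix (Fin d) (Fin d) ℝ) (hsymm : S.IsSymm) (hinv : IsUnit S.det) :
    ∀ x : Vec d, |gsmooth f S x - f x| ≤ L * (d : ℝ) / 4 * opNorm S ^ 2 := by
  intro x
  rcases Nat.eq_zero_or_pos d with hd | hd
  · subst hd
    have huniq : ∀ u : Vec 0, u = 0 := fun u => Subsingleton.elim u 0
    have h1 : ∫ u : Vec 0, Real.exp (-‖u‖ ^ 2) = 1 := by
      rw [integral_gauss_vec 0]
      norm_num
    have hG' : (fun u : Vec 0 => Real.exp (-‖u‖ ^ 2)) = fun _ => (1:ℝ) := by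
      funext u; rw [huniq u]; simp
    have hvol : volume.real (Set.univ : Set (Vec 0)) = 1 := by
      rw [hG'] at h1
      simpa [integral_const] using h1
    have hfun : (fun u : Vec 0 => f (x + mApp S u) * Real.exp (-‖u‖ ^ 2))
        = fun _ => f x := by
      funext u
      rw [huniq u]
      simp [mApp]
    have hgs : gsmooth f S x = f x := by
      rw [gsmooth, hfun, integral_const, hvol]
      norm_num
    rw [hgs]
    simp
  · -- d ≥ 1
    have hL0 : 0 ≤ L := by
      set e : Vec d := EuclideanSpace.single (⟨0, hd⟩ : Fin d) (1:ℝ) with he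
      have h := hL e 0
      have hne : ‖e - 0‖ = 1 := by
        rw [sub_zero, he, EuclideanSpace.norm_single]
        norm_num
      rw [hne, mul_one] at h
      exact le_trans (norm_nonneg _) h
    set C := opNorm S with hC
    have hC0 : 0 ≤ C := norm_nonneg _
    set G : Vec d → ℝ := fun u => Real.exp (-‖u‖ ^ 2) with hGdef
    have hGpos : ∀ u, 0 < G u := fun u => Real.exp_pos _
    have hSu_le : ∀ u : Vec d, ‖mApp S u‖ ≤ C * ‖u‖ := fun u =>
      (LinearMap.toContinuousLinearMap (Matrix.toEuclideanLin S)).le_opNorm u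
    have hmApp_cont : Continuous (fun u : Vec d => mApp S u) :=
      (LinearMap.toContinuousLinearMap (Matrix.toEuclideanLin S)).continuous
    have hGcont : Continuous G := ((continuous_norm.pow 2).neg.rexp)
    have hIntG : Integrable G := by
      have := integrable_gauss_vec (d := d) (b := 1) one_pos
      simpa using this
    -- integrability of the main integrand
    have hInt1 : Integrable (fun u : Vec d => f (x + mApp S u) * G u) := by
      apply Integrable.mono'
        (((hIntG.const_mul |f x|).add
          (integrable_norm_mul_gauss.const_mul (‖gradient f x‖ * C))).add
          (integrable_normsq_mul_gauss.const_mul (L / 2 * C ^ 2)))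
      · exact ((hdiff.continuous.comp (continuous_const.add hmApp_cont)).mul
          hGcont).aestronglyMeasurable
      · refine Filter.Eventually.of_forall fun u => ?_
        have hgb := growth_bound hdiff hL x (mApp S u)
        have hSu := hSu_le u
        have hSu2 : ‖mApp S u‖ ^ 2 ≤ (C * ‖u‖) ^ 2 :=
          pow_le_pow_left₀ (norm_nonneg _) hSu 2
        have hB : |f (x + mApp S u)| ≤
            |f x| + (‖gradient f x‖ * C) * ‖u‖ + (L / 2 * C ^ 2) * ‖u‖ ^ 2 := by
          nlinarith [norm_nonneg (gradient f x), norm_nonneg u, norm_nonneg (mApp S u)]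
        calc ‖f (x + mApp S u) * G u‖ = |f (x + mApp S u)| * G u := by
              rw [Real.norm_eq_abs, abs_mul, abs_of_pos (hGpos u)]
          _ ≤ (|f x| + (‖gradient f x‖ * C) * ‖u‖ + (L / 2 * C ^ 2) * ‖u‖ ^ 2) * G u :=
              mul_le_mul_of_nonneg_right hB (hGpos u).le
          _ = |f x| * G u + (‖gradient f x‖ * C) * (‖u‖ * G u)
              + (L / 2 * C ^ 2) * (‖u‖ ^ 2 * G u) := by ring
    -- neg substitution
    have hemb : MeasurableEmbedding (fun u : Vec d => -u) :=
      (Homeomorph.neg (Vec d)).isClosedEmbedding.measurableEmbedding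
    have hmp : MeasurePreserving (fun u : Vec d => -u) volume volume :=
      Measure.measurePreserving_neg volume
    have hcomp : ∀ u : Vec d, f (x + mApp S (-u)) * G (-u) = f (x - mApp S u) * G u := by
      intro u
      have h1 : mApp S (-u) = -(mApp S u) := by
        simp [mApp]
      rw [h1, ← sub_eq_add_neg]
      simp [hGdef]
    have hneg_eq : ∫ u : Vec d, f (x + mApp S u) * G u
        = ∫ u : Vec d, f (x - mApp S u) * G u := by
      have h := hmp.integral_comp hemb (fun u : Vec d => f (x + mApp S u) * G u)
      rw [← h]
      exact integral_congr_ae (Filter.Eventually.of_forall fun u => hcomp u)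
    have hInt2 : Integrable (fun u : Vec d => f (x - mApp S u) * G u) := by
      have h := (hmp.integrable_comp_emb hemb
        (g := fun u : Vec d => f (x + mApp S u) * G u)).mpr hInt1
      exact h.congr (Filter.Eventually.of_forall fun u => hcomp u)
    set P : ℝ := Real.pi ^ ((d : ℝ) / 2) with hPdef
    have hP : 0 < P := Real.rpow_pos_of_pos Real.pi_pos _
    have hG : ∫ u : Vec d, G u = P := integral_gauss_vec d
    have hM : ∫ u : Vec d, ‖u‖ ^ 2 * G u = (d : ℝ) / 2 * P := integral_normsq_gauss d
    set J : ℝ := ∫ u : Vec d, (f (x + mApp S u) + f (x - mApp S u) - 2 * f x) * G u with hJdef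
    have hJeq : J = 2 * (∫ u : Vec d, f (x + mApp S u) * G u) - 2 * f x * P := by
      have hIntsum : Integrable (fun u : Vec d =>
          f (x + mApp S u) * G u + f (x - mApp S u) * G u) := hInt1.add hInt2
      have hsplit : (fun u : Vec d => (f (x + mApp S u) + f (x - mApp S u) - 2 * f x) * G u)
          = fun u => (f (x + mApp S u) * G u + f (x - mApp S u) * G u) - (2 * f x) * G u := by
        funext u; ring
      have e1 : J = (∫ u : Vec d, (f (x + mApp S u) * G u + f (x - mApp S u) * G u))
          - ∫ u : Vec d, (2 * f x) * G u := by
        rw [hJdef, hsplit]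
        exact integral_sub hIntsum (hIntG.const_mul _)
      rw [e1, integral_add hInt1 hInt2, integral_const_mul, hG, ← hneg_eq]
      ring
    have hJb : |J| ≤ L * C ^ 2 * ((d : ℝ) / 2 * P) := by
      rw [← hM, ← integral_const_mul, ← Real.norm_eq_abs]
      apply norm_integral_le_of_norm_le ((integrable_normsq_mul_gauss).const_mul _)
      refine Filter.Eventually.of_forall fun u => ?_
      have hsym := sym_bound hdiff hL x (mApp S u)
      have hSu := hSu_le u
      have hSu2 : ‖mApp S u‖ ^ 2 ≤ C ^ 2 * ‖u‖ ^ 2 := by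
        have := pow_le_pow_left₀ (norm_nonneg _) hSu 2
        calc ‖mApp S u‖ ^ 2 ≤ (C * ‖u‖) ^ 2 := this
          _ = C ^ 2 * ‖u‖ ^ 2 := by ring
      calc ‖(f (x + mApp S u) + f (x - mApp S u) - 2 * f x) * G u‖
          = |f (x + mApp S u) + f (x - mApp S u) - 2 * f x| * G u := by
            rw [Real.norm_eq_abs, abs_mul, abs_of_pos (hGpos u)]
        _ ≤ (L * ‖mApp S u‖ ^ 2) * G u := mul_le_mul_of_nonneg_right hsym (hGpos u).le
        _ ≤ (L * (C ^ 2 * ‖u‖ ^ 2)) * G u := by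
            apply mul_le_mul_of_nonneg_right _ (hGpos u).le
            exact mul_le_mul_of_nonneg_left hSu2 hL0
        _ = L * C ^ 2 * (‖u‖ ^ 2 * G u) := by ring
    have hgsub : gsmooth f S x - f x = P⁻¹ * (J / 2) := by
      rw [gsmooth, hJeq]
      field_simp
      ring
    rw [hgsub, abs_mul, abs_of_pos (inv_pos.mpr hP), abs_div]
    rw [abs_of_pos (by norm_num : (0:ℝ) < 2)]
    calc P⁻¹ * (|J| / 2) ≤ P⁻¹ * ((L * C ^ 2 * ((d : ℝ) / 2 * P)) / 2) := by
          apply mul_le_mul_of_nonneg_left _ (inv_pos.mpr hP).le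
          linarith
      _ = L * (d : ℝ) / 4 * C ^ 2 := by
          field_simp
          ring

end
end

section
/- Let f:ℝ^d→ℝ be measurable with at most polynomial growth, and let Σ, T ∈ℝ^{d×d} be symmetric and invertible. Then Σ² + T² is symmetric positive definite, and if H = √(Σ² + T²) denotes its (unique symmetric positive definite) square root, then (f_Σ)_T(x) = f_H(x) for every x∈ℝ^d; that is, smoothing by Σ and then by T equals smoothing by √(Σ²+T²). -/
open MeasureTheory Filter Matrix

noncomputable section

section Aux

open Real RealInnerProductSpace

variable {d : ℕ}

lemma aux_mApp_mul (M N : Matrix (Fin d) (Fin d) ℝ) (u : Vec d) :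
    mApp (M * N) u = mApp M (mApp N u) := by
  simp [mApp, Matrix.toEuclideanLin_apply, Matrix.mulVec_mulVec]

lemma aux_mApp_add (M N : Matrix (Fin d) (Fin d) ℝ) (u : Vec d) :
    mApp (M + N) u = mApp M u + mApp N u := by
  simp [mApp]

lemma aux_mApp_add_vec (M : Matrix (Fin d) (Fin d) ℝ) (a b : Vec d) :
    mApp M (a + b) = mApp M a + mApp M b :=
  map_add (Matrix.toEuclideanLin M) a b

lemma aux_mApp_one (u : Vec d) : mApp 1 u = u := by
  simp [mApp, Matrix.toEuclideanLin_apply, Matrix.one_mulVec]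

lemma aux_inner_mApp (M : Matrix (Fin d) (Fin d) ℝ) (a b : Vec d) :
    ⟪mApp M a, b⟫ = ⟪a, mApp Mᵀ b⟫ := by
  have h : Mᵀ = Mᴴ := (Matrix.conjTranspose_eq_transpose_of_trivial M).symm
  rw [h]
  show ⟪Matrix.toEuclideanLin M a, b⟫ = ⟪a, Matrix.toEuclideanLin Mᴴ b⟫
  rw [Matrix.toEuclideanLin_conjTranspose_eq_adjoint, LinearMap.adjoint_inner_right]

lemma aux_posDef_sq {S : Matrix (Fin d) (Fin d) ℝ} (hS : S.IsSymm) (h : IsUnit S.det) :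
    (S * S).PosDef := by
  have hH : S * S = Sᴴ * S := by
    rw [Matrix.conjTranspose_eq_transpose_of_trivial, hS]
  constructor
  · rw [hH]; exact Matrix.isHermitian_conjTranspose_mul_self S
  · rw [hH]
    refine (Matrix.PosDef.conjTranspose_mul_self S ?_).2
    intro a b hab
    have := congrArg (fun z => S⁻¹ *ᵥ z) hab
    simpa [Matrix.mulVec_mulVec, Matrix.nonsing_inv_mul _ h] using this

variable {V : Type*} [NormedAddCommGroup V] [InnerProductSpace ℝ V] [FiniteDimensional ℝ V]
  [MeasurableSpace V] [BorelSpace V]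

lemma aux_integrable_gauss {b : ℝ} (hb : 0 < b) :
    Integrable (fun v : V => Real.exp (-b * ‖v‖ ^ 2)) := by
  have h := (GaussianFourier.integrable_cexp_neg_mul_sq_norm_add (V := V)
    (b := (b : ℂ)) (by simpa using hb) 0 (0 : V)).norm
  refine h.congr ?_
  filter_upwards with v
  rw [Complex.norm_exp]
  norm_num
  left
  norm_cast

lemma aux_integral_gauss :
    ∫ v : V, Real.exp (-‖v‖ ^ 2) = Real.pi ^ ((Module.finrank ℝ V : ℝ) / 2) := by
  have h := GaussianFourier.integral_rexp_neg_mul_sq_norm (V := V) (b := 1) one_pos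
  simpa using h

lemma aux_norm_sq_withLp {α β : Type*} [NormedAddCommGroup α] [InnerProductSpace ℝ α]
    [NormedAddCommGroup β] [InnerProductSpace ℝ β] (e : WithLp 2 (α × β)) :
    ‖e‖ ^ 2 = ‖e.fst‖ ^ 2 + ‖e.snd‖ ^ 2 := by
  rw [← real_inner_self_eq_norm_sq, WithLp.prod_inner_apply,
    real_inner_self_eq_norm_sq, real_inner_self_eq_norm_sq]
  rfl

lemma aux_poly_gauss (n : ℕ) {t : ℝ} (ht : 0 ≤ t) :
    (1 + t) ^ n * Real.exp (-t ^ 2)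
      ≤ Real.exp ((n : ℝ) ^ 2 / 2) * Real.exp (-(1 / 2) * t ^ 2) := by
  have h1 : (1 + t) ^ n ≤ Real.exp ((n : ℝ) * t) := by
    calc (1 + t) ^ n ≤ (Real.exp t) ^ n := by
          apply pow_le_pow_left₀ (by linarith)
          linarith [Real.add_one_le_exp t]
      _ = Real.exp ((n : ℝ) * t) := by rw [← Real.exp_nat_mul]
  calc (1 + t) ^ n * Real.exp (-t ^ 2)
      ≤ Real.exp ((n : ℝ) * t) * Real.exp (-t ^ 2) :=
        mul_le_mul_of_nonneg_right h1 (Real.exp_nonneg _)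
    _ = Real.exp ((n : ℝ) * t + -t ^ 2) := (Real.exp_add _ _).symm
    _ ≤ Real.exp ((n : ℝ) ^ 2 / 2 + -(1 / 2) * t ^ 2) := by
        apply Real.exp_le_exp.2
        nlinarith [sq_nonneg ((n : ℝ) - t)]
    _ = Real.exp ((n : ℝ) ^ 2 / 2) * Real.exp (-(1 / 2) * t ^ 2) := Real.exp_add _ _

end Aux

section ProdL2

variable (α β : Type*)
  [NormedAddCommGroup α] [InnerProductSpace ℝ α] [FiniteDimensional ℝ α]
  [MeasurableSpace α] [BorelSpace α]
  [NormedAddCommGroup β] [InnerProductSpace ℝ β] [FiniteDimensional ℝ β]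
  [MeasurableSpace β] [BorelSpace β]

instance aux_mspace : MeasurableSpace (WithLp 2 (α × β)) := borel _
instance aux_borel : BorelSpace (WithLp 2 (α × β)) := ⟨rfl⟩
instance aux_findim : FiniteDimensional ℝ (WithLp 2 (α × β)) :=
  (WithLp.linearEquiv 2 ℝ (α × β)).symm.finiteDimensional
instance aux_sct : SecondCountableTopology (WithLp 2 (α × β)) :=
  (WithLp.prodContinuousLinearEquiv 2 ℝ α β).toHomeomorph.isEmbedding.secondCountableTopology

lemma aux_volume_preserving_prodL2 :
    MeasurePreserving ((WithLp.equiv 2 (α × β)).symm : α × β → WithLp 2 (α × β))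
      volume volume := by
  set cle := (WithLp.prodContinuousLinearEquiv 2 ℝ α β).symm with hcle
  have hmeas : Measurable ((WithLp.equiv 2 (α × β)).symm : α × β → WithLp 2 (α × β)) :=
    cle.continuous.measurable
  refine ⟨hmeas, ?_⟩
  have h1 : ((stdOrthonormalBasis ℝ α).prod (stdOrthonormalBasis ℝ β)).toBasis.addHaar
      = (volume : Measure (WithLp 2 (α × β))) :=
    OrthonormalBasis.addHaar_eq_volume _
  have h2 : ((stdOrthonormalBasis ℝ α).prod (stdOrthonormalBasis ℝ β)).toBasis
      = ((stdOrthonormalBasis ℝ α).toBasis.prod (stdOrthonormalBasis ℝ β).toBasis).map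
        (WithLp.linearEquiv 2 ℝ (α × β)).symm :=
    Module.Basis.toBasis_toOrthonormalBasis _ _
  have h3 : (WithLp.linearEquiv 2 ℝ (α × β)).symm = cle.toLinearEquiv := rfl
  rw [h2, h3, ← Module.Basis.map_addHaar _ cle, Module.Basis.prod_addHaar,
    (stdOrthonormalBasis ℝ α).addHaar_eq_volume, (stdOrthonormalBasis ℝ β).addHaar_eq_volume,
    ← Measure.volume_eq_prod] at h1
  exact h1

end ProdL2

open Real RealInnerProductSpace

set_option maxHeartbeats 1600000 in
/-- `Σ² + T²` is symmetric positive definite, and smoothing by `Σ` and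
then by `T` equals smoothing by `H = √(Σ² + T²)`. -/
theorem stmt_10 {d : ℕ} (f : Vec d → ℝ) (hfm : Measurable f)
    (hpoly : ∃ (C : ℝ) (n : ℕ), ∀ x : Vec d, |f x| ≤ C * (1 + ‖x‖) ^ n)
    (S T : Matrix (Fin d) (Fin d) ℝ)
    (hSsymm : S.IsSymm) (hSinv : IsUnit S.det)
    (hTsymm : T.IsSymm) (hTinv : IsUnit T.det) :
    ((S * S + T * T).IsSymm ∧ (S * S + T * T).PosDef) ∧
    ∀ H : Matrix (Fin d) (Fin d) ℝ, H.IsSymm → H.PosDef → H * H = S * S + T * T →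
      ∀ x : Vec d, gsmooth (gsmooth f S) T x = gsmooth f H x := by
  classical
  obtain ⟨C, n, hpoly⟩ := hpoly
  have part1symm : (S * S + T * T).IsSymm := by
    unfold Matrix.IsSymm
    rw [Matrix.transpose_add, Matrix.transpose_mul, Matrix.transpose_mul, hSsymm, hTsymm]
  have part1pos : (S * S + T * T).PosDef :=
    (aux_posDef_sq hSsymm hSinv).add (aux_posDef_sq hTsymm hTinv)
  refine ⟨⟨part1symm, part1pos⟩, ?_⟩
  intro H hHsymm hHpos hH x
  -- matrix facts
  have hHdet : IsUnit H.det := hHpos.det_pos.ne'.isUnit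
  set Hi := H⁻¹ with hHidef
  have hHHi : H * Hi = 1 := Matrix.mul_nonsing_inv _ hHdet
  have hHiH : Hi * H = 1 := Matrix.nonsing_inv_mul _ hHdet
  have hHisymm : Hiᵀ = Hi := by
    rw [hHidef, Matrix.transpose_nonsing_inv, hHsymm]
  -- the space E = (ℝ^d × ℝ^d) with the L² structure
  set E := WithLp 2 (Vec d × Vec d) with hEdef
  set ψl := WithLp.linearEquiv 2 ℝ (Vec d × Vec d) with hψldef
  set A : E →ₗ[ℝ] Vec d := (Matrix.toEuclideanLin Hi) ∘ₗ
    ((Matrix.toEuclideanLin T) ∘ₗ ((LinearMap.fst ℝ (Vec d) (Vec d)) ∘ₗ ψl.toLinearMap)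
      + (Matrix.toEuclideanLin S) ∘ₗ ((LinearMap.snd ℝ (Vec d) (Vec d)) ∘ₗ ψl.toLinearMap))
    with hAdef
  have hA : ∀ e : E, A e = mApp Hi (mApp T e.fst + mApp S e.snd) := fun e => rfl
  set σm : Vec d →ₗ[ℝ] E := ψl.symm.toLinearMap ∘ₗ
    (LinearMap.prod ((Matrix.toEuclideanLin T) ∘ₗ (Matrix.toEuclideanLin Hi))
      ((Matrix.toEuclideanLin S) ∘ₗ (Matrix.toEuclideanLin Hi))) with hσdef
  have hσ1 : ∀ w, (σm w).fst = mApp T (mApp Hi w) := fun w => rfl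
  have hσ2 : ∀ w, (σm w).snd = mApp S (mApp Hi w) := fun w => rfl
  have hAσ : ∀ w, A (σm w) = w := by
    intro w
    rw [hA, hσ1, hσ2, ← aux_mApp_mul T Hi, ← aux_mApp_mul S Hi, ← aux_mApp_mul,
      ← aux_mApp_mul, ← aux_mApp_add, ← aux_mApp_mul]
    have hkey : Hi * (T * (T * Hi) + S * (S * Hi)) = 1 := by
      rw [← mul_assoc T T Hi, ← mul_assoc S S Hi, ← add_mul, add_comm (T * T) (S * S), ← hH,
        mul_assoc H H Hi, hHHi, mul_one, hHiH]
    rw [hkey, aux_mApp_one]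
  have hinner : ∀ (w : Vec d) (e : E), ⟪σm w, e⟫ = ⟪w, A e⟫ := by
    intro w e
    rw [WithLp.prod_inner_apply, WithLp.ofLp_fst, WithLp.ofLp_snd, hσ1, hσ2, ← aux_mApp_mul T Hi, ← aux_mApp_mul S Hi,
      aux_inner_mApp, aux_inner_mApp, Matrix.transpose_mul, Matrix.transpose_mul,
      hHisymm, hSsymm, hTsymm, hA, aux_mApp_add_vec, inner_add_right,
      ← aux_mApp_mul Hi T, ← aux_mApp_mul Hi S]
    rfl
  have hAnorm : ∀ e : E, ⟪σm (A e), e⟫ = ‖A e‖ ^ 2 := fun e => by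
    rw [hinner, real_inner_self_eq_norm_sq]
  have hQnorm : ∀ e : E, ‖e - σm (A e)‖ ^ 2 = ‖e‖ ^ 2 - ‖A e‖ ^ 2 := by
    intro e
    have h1 : ⟪e, σm (A e)⟫ = ‖A e‖ ^ 2 := by rw [real_inner_comm]; exact hAnorm e
    have h2 : ‖σm (A e)‖ ^ 2 = ‖A e‖ ^ 2 := by
      rw [← real_inner_self_eq_norm_sq, hinner, hAσ, real_inner_self_eq_norm_sq]
    rw [norm_sub_sq_real, h1, h2]; ring
  have hAsurj : Function.Surjective A := fun w => ⟨σm w, hAσ w⟩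
  set K := LinearMap.ker A with hKdef
  have hrankK : Module.finrank ℝ K = d := by
    rw [hKdef]
    have h1 := LinearMap.finrank_range_add_finrank_ker A
    rw [LinearMap.range_eq_top.2 hAsurj, finrank_top] at h1
    have h3 : Module.finrank ℝ E = d + d := by
      rw [ψl.finrank_eq, Module.finrank_prod, finrank_euclideanSpace_fin]
    rw [h3, finrank_euclideanSpace_fin] at h1
    omega
  set B : K ≃ₗᵢ[ℝ] Vec d :=
    (stdOrthonormalBasis ℝ K).repr.trans
      (LinearIsometryEquiv.piLpCongrLeft 2 ℝ ℝ (finCongr hrankK)) with hBdef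
  set D : E →ₗ[ℝ] E := LinearMap.id - σm ∘ₗ A with hDdef
  have hQK : ∀ e : E, D e ∈ K := by
    intro e
    simp only [hDdef, hKdef, LinearMap.mem_ker, LinearMap.sub_apply, LinearMap.id_apply,
      LinearMap.comp_apply, map_sub, hAσ, sub_self]
  set Qm : E →ₗ[ℝ] K := D.codRestrict K hQK with hQmdef
  set L : E →ₗ[ℝ] E :=
    ψl.symm.toLinearMap ∘ₗ LinearMap.prod A (B.toLinearEquiv.toLinearMap ∘ₗ Qm) with hLdef
  have hL1 : ∀ e : E, (L e).fst = A e := fun e => rfl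
  have hL2 : ∀ e : E, (L e).snd = B (Qm e) := fun e => rfl
  have hQme : ∀ e : E, ((Qm e : E)) = e - σm (A e) := fun e => rfl
  have hLnorm : ∀ e : E, ‖L e‖ = ‖e‖ := by
    intro e
    have h1 : ‖L e‖ ^ 2 = ‖e‖ ^ 2 := by
      rw [aux_norm_sq_withLp (L e), hL1, hL2]
      have h3 : ‖B (Qm e)‖ = ‖(Qm e : E)‖ := by rw [B.norm_map]; rfl
      rw [h3, hQme, hQnorm]; ring
    have := congrArg Real.sqrt h1
    rwa [Real.sqrt_sq (norm_nonneg _), Real.sqrt_sq (norm_nonneg _)] at this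
  set Li : E →ₗᵢ[ℝ] E := ⟨L, hLnorm⟩ with hLidef
  have hLsurj : Function.Surjective L := LinearMap.injective_iff_surjective.mp Li.injective
  set Φ : E ≃ₗᵢ[ℝ] E := LinearIsometryEquiv.ofSurjective Li hLsurj with hΦdef
  have hΦapp : ∀ e : E, Φ e = L e := fun e =>
    congrFun (LinearIsometryEquiv.coe_ofSurjective Li hLsurj) e
  have hΦ1 : ∀ e : E, (Φ e).fst = A e := fun e => by rw [hΦapp]; exact hL1 e
  have hAΦsymm : ∀ e : E, A (Φ.symm e) = e.fst := by
    intro e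
    have h := hΦ1 (Φ.symm e)
    rw [Φ.apply_symm_apply] at h
    exact h.symm
  -- measure preserving maps
  set ψm : (Vec d × Vec d) ≃ᵐ E :=
    (WithLp.prodContinuousLinearEquiv 2 ℝ (Vec d) (Vec d)).symm.toHomeomorph.toMeasurableEquiv
    with hψmdef
  have hψMP : MeasurePreserving ψm volume volume :=
    ⟨ψm.measurable, (aux_volume_preserving_prodL2 (Vec d) (Vec d)).map_eq⟩
  have hψ1 : ∀ p : Vec d × Vec d, ((ψm p : E)).fst = p.1 := fun p => rfl
  have hψ2 : ∀ p : Vec d × Vec d, ((ψm p : E)).snd = p.2 := fun p => rfl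
  have hΦMP : MeasurePreserving Φ volume volume := Φ.measurePreserving
  -- the key identity
  have key : (∫ p : Vec d × Vec d,
        f (x + mApp T p.1 + mApp S p.2) * (Real.exp (-‖p.2‖ ^ 2) * Real.exp (-‖p.1‖ ^ 2)))
      = (∫ w : Vec d, f (x + mApp H w) * Real.exp (-‖w‖ ^ 2))
          * ∫ z : Vec d, Real.exp (-‖z‖ ^ 2) := by
    have e1 : (fun p : Vec d × Vec d =>
          f (x + mApp T p.1 + mApp S p.2) * (Real.exp (-‖p.2‖ ^ 2) * Real.exp (-‖p.1‖ ^ 2)))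
        = (fun e : E => f (x + mApp H (A e)) * Real.exp (-‖e‖ ^ 2)) ∘ ψm := by
      funext p
      have hHA : mApp H (A (ψm p)) = mApp T p.1 + mApp S p.2 := by
        rw [hA, hψ1, hψ2, ← aux_mApp_mul, hHHi, aux_mApp_one]
      have hnrm : (-‖(ψm p : E)‖ ^ 2 : ℝ) = -‖p.2‖ ^ 2 + -‖p.1‖ ^ 2 := by
        rw [aux_norm_sq_withLp, hψ1, hψ2]; ring
      simp only [Function.comp_apply]
      rw [hHA, hnrm, Real.exp_add, add_assoc]
    have e2 : (∫ p : Vec d × Vec d,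
          f (x + mApp T p.1 + mApp S p.2) * (Real.exp (-‖p.2‖ ^ 2) * Real.exp (-‖p.1‖ ^ 2)))
        = ∫ e : E, f (x + mApp H (A e)) * Real.exp (-‖e‖ ^ 2) := by
      rw [e1]
      exact hψMP.integral_comp ψm.measurableEmbedding
        (fun e : E => f (x + mApp H (A e)) * Real.exp (-‖e‖ ^ 2))
    have e3 : (∫ e : E, f (x + mApp H (A e)) * Real.exp (-‖e‖ ^ 2))
        = ∫ e : E, f (x + mApp H e.fst) * Real.exp (-‖e‖ ^ 2) := by
      have h := hΦMP.integral_comp Φ.toHomeomorph.toMeasurableEquiv.measurableEmbedding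
        (fun e : E => f (x + mApp H e.fst) * Real.exp (-‖e‖ ^ 2))
      rw [← h]
      congr 1
      funext e
      rw [hΦ1, Φ.norm_map]
    have e4 : (∫ e : E, f (x + mApp H e.fst) * Real.exp (-‖e‖ ^ 2))
        = ∫ p : Vec d × Vec d,
            (f (x + mApp H p.1) * Real.exp (-‖p.1‖ ^ 2)) * Real.exp (-‖p.2‖ ^ 2) := by
      rw [← hψMP.integral_comp ψm.measurableEmbedding]
      congr 1
      funext p
      have hnrm : (-‖(ψm p : E)‖ ^ 2 : ℝ) = -‖p.1‖ ^ 2 + -‖p.2‖ ^ 2 := by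
        rw [aux_norm_sq_withLp, hψ1, hψ2]; ring
      rw [hψ1, hnrm, Real.exp_add, mul_assoc]
    have e5 : (∫ p : Vec d × Vec d,
          (f (x + mApp H p.1) * Real.exp (-‖p.1‖ ^ 2)) * Real.exp (-‖p.2‖ ^ 2))
        = (∫ w : Vec d, f (x + mApp H w) * Real.exp (-‖w‖ ^ 2))
            * ∫ z : Vec d, Real.exp (-‖z‖ ^ 2) := by
      rw [Measure.volume_eq_prod]
      exact integral_prod_mul (fun w : Vec d => f (x + mApp H w) * Real.exp (-‖w‖ ^ 2))
        (fun z : Vec d => Real.exp (-‖z‖ ^ 2))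
    rw [e2, e3, e4, e5]
  -- integrability on the product space
  have hC : 0 ≤ C := by
    have h0 := hpoly 0
    have h1 : (0 : ℝ) < (1 + ‖(0 : Vec d)‖) ^ n := by
      have h2 : (0 : ℝ) < 1 + ‖(0 : Vec d)‖ := by linarith [norm_nonneg (0 : Vec d)]
      exact pow_pos h2 n
    nlinarith [abs_nonneg (f 0)]
  have hopS : ∀ u : Vec d, ‖mApp S u‖ ≤ opNorm S * ‖u‖ := fun u =>
    (LinearMap.toContinuousLinearMap (Matrix.toEuclideanLin S)).le_opNorm u
  have hopT : ∀ u : Vec d, ‖mApp T u‖ ≤ opNorm T * ‖u‖ := fun u =>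
    (LinearMap.toContinuousLinearMap (Matrix.toEuclideanLin T)).le_opNorm u
  set M0 : ℝ := 1 + ‖x‖ + opNorm S + opNorm T with hM0def
  have hM0S : 0 ≤ opNorm S := norm_nonneg _
  have hM0T : 0 ≤ opNorm T := norm_nonneg _
  set C0 : ℝ := C * M0 ^ n * (Real.exp ((n : ℝ) ^ 2 / 2) * Real.exp ((n : ℝ) ^ 2 / 2))
    with hC0def
  have hbound : ∀ p : Vec d × Vec d,
      |f (x + mApp T p.1 + mApp S p.2) * (Real.exp (-‖p.2‖ ^ 2) * Real.exp (-‖p.1‖ ^ 2))|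
        ≤ C0 * (Real.exp (-(1 / 2) * ‖p.1‖ ^ 2) * Real.exp (-(1 / 2) * ‖p.2‖ ^ 2)) := by
    intro p
    set a := ‖p.1‖ with hadef
    set b := ‖p.2‖ with hbdef
    have ha : 0 ≤ a := norm_nonneg _
    have hb : 0 ≤ b := norm_nonneg _
    set y := x + mApp T p.1 + mApp S p.2 with hydef
    have h1 : ‖y‖ ≤ ‖x‖ + opNorm T * a + opNorm S * b := by
      calc ‖y‖ ≤ ‖x + mApp T p.1‖ + ‖mApp S p.2‖ := norm_add_le _ _
        _ ≤ (‖x‖ + ‖mApp T p.1‖) + ‖mApp S p.2‖ := by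
            have := norm_add_le x (mApp T p.1); linarith
        _ ≤ ‖x‖ + opNorm T * a + opNorm S * b := by
            have := hopT p.1; have := hopS p.2; linarith
    have h2 : 1 + ‖y‖ ≤ M0 * ((1 + a) * (1 + b)) := by
      have hx0 : 0 ≤ ‖x‖ := norm_nonneg _
      nlinarith [mul_nonneg ha hb, mul_nonneg hM0S hb, mul_nonneg hM0T ha,
        mul_nonneg hx0 ha, mul_nonneg hx0 hb, mul_nonneg (mul_nonneg hx0 ha) hb,
        mul_nonneg ha hb, mul_nonneg hM0S (mul_nonneg ha hb),
        mul_nonneg hM0T (mul_nonneg ha hb)]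
    have h3 : |f y| ≤ C * (M0 ^ n * ((1 + a) ^ n * (1 + b) ^ n)) := by
      have := hpoly y
      have h4 : (1 + ‖y‖) ^ n ≤ (M0 * ((1 + a) * (1 + b))) ^ n :=
        pow_le_pow_left₀ (by positivity) h2 n
      rw [mul_pow, mul_pow] at h4
      calc |f y| ≤ C * (1 + ‖y‖) ^ n := hpoly y
        _ ≤ C * (M0 ^ n * ((1 + a) ^ n * (1 + b) ^ n)) :=
            mul_le_mul_of_nonneg_left h4 hC
    have hgpos : |f y * (Real.exp (-b ^ 2) * Real.exp (-a ^ 2))|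
        = |f y| * (Real.exp (-b ^ 2) * Real.exp (-a ^ 2)) := by
      rw [abs_mul, abs_of_pos (show (0 : ℝ) < Real.exp (-b ^ 2) * Real.exp (-a ^ 2) by
        positivity)]
    rw [hgpos]
    have hfac1 : (1 + a) ^ n * Real.exp (-a ^ 2)
        ≤ Real.exp ((n : ℝ) ^ 2 / 2) * Real.exp (-(1 / 2) * a ^ 2) := aux_poly_gauss n ha
    have hfac2 : (1 + b) ^ n * Real.exp (-b ^ 2)
        ≤ Real.exp ((n : ℝ) ^ 2 / 2) * Real.exp (-(1 / 2) * b ^ 2) := aux_poly_gauss n hb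
    calc |f y| * (Real.exp (-b ^ 2) * Real.exp (-a ^ 2))
        ≤ (C * (M0 ^ n * ((1 + a) ^ n * (1 + b) ^ n)))
            * (Real.exp (-b ^ 2) * Real.exp (-a ^ 2)) := by
          apply mul_le_mul_of_nonneg_right h3 (by positivity)
      _ = (C * M0 ^ n) * (((1 + a) ^ n * Real.exp (-a ^ 2))
            * ((1 + b) ^ n * Real.exp (-b ^ 2))) := by ring
      _ ≤ (C * M0 ^ n) * ((Real.exp ((n : ℝ) ^ 2 / 2) * Real.exp (-(1 / 2) * a ^ 2))
            * (Real.exp ((n : ℝ) ^ 2 / 2) * Real.exp (-(1 / 2) * b ^ 2))) := by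
          apply mul_le_mul_of_nonneg_left _ (by positivity)
          exact mul_le_mul hfac1 hfac2 (by positivity) (by positivity)
      _ = C0 * (Real.exp (-(1 / 2) * a ^ 2) * Real.exp (-(1 / 2) * b ^ 2)) := by
          rw [hC0def]; ring
  have hcont1 : Continuous fun p : Vec d × Vec d => x + mApp T p.1 + mApp S p.2 := by
    have hcT : Continuous fun u : Vec d => mApp T u :=
      (Matrix.toEuclideanLin T).continuous_of_finiteDimensional
    have hcS : Continuous fun u : Vec d => mApp S u :=
      (Matrix.toEuclideanLin S).continuous_of_finiteDimensional
    exact ((continuous_const.add (hcT.comp continuous_fst)).add (hcS.comp continuous_snd))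
  have hInt : Integrable (fun p : Vec d × Vec d =>
      f (x + mApp T p.1 + mApp S p.2) * (Real.exp (-‖p.2‖ ^ 2) * Real.exp (-‖p.1‖ ^ 2)))
      (volume : Measure (Vec d × Vec d)) := by
    have hcexp : Continuous fun p : Vec d × Vec d =>
        Real.exp (-‖p.2‖ ^ 2) * Real.exp (-‖p.1‖ ^ 2) := by
      apply Continuous.mul
      · exact Real.continuous_exp.comp ((continuous_norm.comp continuous_snd).pow 2).neg
      · exact Real.continuous_exp.comp ((continuous_norm.comp continuous_fst).pow 2).neg
    have hmeas : AEStronglyMeasurable (fun p : Vec d × Vec d =>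
        f (x + mApp T p.1 + mApp S p.2) * (Real.exp (-‖p.2‖ ^ 2) * Real.exp (-‖p.1‖ ^ 2)))
        volume :=
      ((hfm.comp hcont1.measurable).mul hcexp.measurable).aestronglyMeasurable
    have hg2 : Integrable (fun w : Vec d => Real.exp (-(1 / 2) * ‖w‖ ^ 2)) :=
      aux_integrable_gauss (by norm_num)
    have hgprod := (hg2.mul_prod hg2).const_mul C0
    rw [← Measure.volume_eq_prod] at hgprod
    refine hgprod.mono' hmeas ?_
    filter_upwards with p
    rw [Real.norm_eq_abs]
    exact hbound p
  -- Gaussian normalization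
  have hπ : (0 : ℝ) < Real.pi ^ ((d : ℝ) / 2) := Real.rpow_pos_of_pos Real.pi_pos _
  have hIg : (∫ z : Vec d, Real.exp (-‖z‖ ^ 2)) = Real.pi ^ ((d : ℝ) / 2) := by
    have h := aux_integral_gauss (V := Vec d)
    rwa [finrank_euclideanSpace_fin] at h
  -- the final computation
  have hfub : (∫ v : Vec d, ∫ u : Vec d,
        f (x + mApp T v + mApp S u) * (Real.exp (-‖u‖ ^ 2) * Real.exp (-‖v‖ ^ 2)))
      = ∫ p : Vec d × Vec d,
          f (x + mApp T p.1 + mApp S p.2) *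
            (Real.exp (-‖p.2‖ ^ 2) * Real.exp (-‖p.1‖ ^ 2)) := by
    rw [Measure.volume_eq_prod] at hInt ⊢
    exact integral_integral hInt
  have hfun1 : (fun v : Vec d => ((Real.pi ^ ((d : ℝ) / 2))⁻¹
        * ∫ u : Vec d, f (x + mApp T v + mApp S u) * Real.exp (-‖u‖ ^ 2))
        * Real.exp (-‖v‖ ^ 2))
      = fun v : Vec d => (Real.pi ^ ((d : ℝ) / 2))⁻¹
        * ∫ u : Vec d, f (x + mApp T v + mApp S u)
            * (Real.exp (-‖u‖ ^ 2) * Real.exp (-‖v‖ ^ 2)) := by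
    funext v
    rw [mul_assoc]
    congr 1
    rw [← integral_mul_const]
    congr 1
    funext u
    ring
  simp only [gsmooth]
  rw [hfun1, integral_const_mul, hfub, key, hIg]
  have hPne : (Real.pi ^ ((d : ℝ) / 2)) ≠ 0 := ne_of_gt hπ
  field_simp

end
end

section
/- (Convergence of AGS-GD for non-convex L-smooth functions.) Let f:ℝ^d→ℝ be L-smooth with finite minimum f*. Let (Σ_t)_{t≥1} be symmetric invertible matrices, let 0 < λ ≤ 1/L, and define the iterates x_t = x_{t−1} − λ·∇f_{Σ_t}(x_{t−1}) for t = 1,...,T starting from x₀∈ℝ^d. Let B(Σ,T') be any function satisfying |f_Σ(x) − f_{T'}(x)| ≤ B(Σ,T') for all x. Then min_{t=1,...,T} ‖∇f(x_t)‖² ≤ (4/(Tλ))·(f(x₀) − f*) + (L²/T)·((6+d)/2)³·Σ_{t=1}^{T}‖Σ_t‖⁴‖Σ_t^{-1}‖² + (4/(Tλ))·Σ_{t=0}^{T} B(Σ_{t+1}, Σ_t). -/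
open MeasureTheory Filter Matrix RealInnerProductSpace

noncomputable section

set_option maxHeartbeats 10000000

namespace AGS


variable {d : ℕ}

lemma integrable_gauss {b : ℝ} (hb : 0 < b) :
    Integrable (fun u : Vec d => Real.exp (-b * ‖u‖ ^ 2)) := by
  have h := (GaussianFourier.integrable_cexp_neg_mul_sq_norm_add (V := Vec d)
    (b := (b : ℂ)) (by simpa using hb) 0 0).norm
  apply h.congr
  filter_upwards with v
  simp [Complex.norm_exp, ← Complex.ofReal_pow]

lemma integrable_gauss_one :
    Integrable (fun u : Vec d => Real.exp (-‖u‖ ^ 2)) := by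
  simpa using integrable_gauss (d := d) one_pos

lemma integral_gauss : ∫ u : Vec d, Real.exp (-‖u‖ ^ 2) = Real.pi ^ ((d : ℝ) / 2) := by
  have h := GaussianFourier.integral_rexp_neg_mul_sq_norm (V := Vec d) (b := 1) one_pos
  simpa [finrank_euclideanSpace_fin] using h

lemma poly_gauss_pointwise {b t : ℝ} (ht : 0 ≤ t) (hb : 0 < b) :
    (1 + t + t ^ 2) * Real.exp (-b * t ^ 2) ≤ (2 + 4 / b) * Real.exp (-(b / 2) * t ^ 2) := by
  have h0 : (0:ℝ) < 4 / b := by positivity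
  have hx : (0:ℝ) ≤ (b / 2) * t ^ 2 := by positivity
  have h1 : Real.exp (-(b / 2) * t ^ 2) * (1 + (b / 2) * t ^ 2) ≤ 1 := by
    have h2 := Real.add_one_le_exp ((b / 2) * t ^ 2)
    rw [neg_mul, Real.exp_neg, inv_mul_le_iff₀ (Real.exp_pos _)]
    linarith
  have hsplit : Real.exp (-b * t ^ 2) =
      Real.exp (-(b / 2) * t ^ 2) * Real.exp (-(b / 2) * t ^ 2) := by
    rw [← Real.exp_add]; ring_nf
  rw [hsplit]
  have hpoly : 1 + t + t ^ 2 ≤ (2 + 4 / b) * (1 + (b / 2) * t ^ 2) := by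
    have h3 : (4 / b) * ((b / 2) * t ^ 2) = 2 * t ^ 2 := by field_simp; ring
    nlinarith [sq_nonneg (t - 1), sq_nonneg t]
  calc (1 + t + t ^ 2) * (Real.exp (-(b / 2) * t ^ 2) * Real.exp (-(b / 2) * t ^ 2))
      = ((1 + t + t ^ 2) * Real.exp (-(b / 2) * t ^ 2)) * Real.exp (-(b / 2) * t ^ 2) := by ring
    _ ≤ (((2 + 4 / b) * (1 + (b / 2) * t ^ 2)) * Real.exp (-(b / 2) * t ^ 2)) *
        Real.exp (-(b / 2) * t ^ 2) := by
        have := Real.exp_nonneg (-(b / 2) * t ^ 2)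
        apply mul_le_mul_of_nonneg_right _ this
        exact mul_le_mul_of_nonneg_right hpoly this
    _ = ((2 + 4 / b) * (Real.exp (-(b / 2) * t ^ 2) * (1 + (b / 2) * t ^ 2))) *
        Real.exp (-(b / 2) * t ^ 2) := by ring
    _ ≤ ((2 + 4 / b) * 1) * Real.exp (-(b / 2) * t ^ 2) := by
        apply mul_le_mul_of_nonneg_right _ (Real.exp_nonneg _)
        exact mul_le_mul_of_nonneg_left h1 (by positivity)
    _ = (2 + 4 / b) * Real.exp (-(b / 2) * t ^ 2) := by ring

lemma cont_poly : Continuous (fun u : Vec d => 1 + ‖u‖ + ‖u‖ ^ 2) := by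
  continuity

lemma cont_gaussw {b : ℝ} : Continuous (fun u : Vec d => Real.exp (-b * ‖u‖ ^ 2)) := by
  continuity

lemma cont_gaussw_one : Continuous (fun u : Vec d => Real.exp (-‖u‖ ^ 2)) := by
  continuity

lemma integrable_poly_gauss {b : ℝ} (hb : 0 < b) :
    Integrable (fun u : Vec d => (1 + ‖u‖ + ‖u‖ ^ 2) * Real.exp (-b * ‖u‖ ^ 2)) := by
  apply Integrable.mono' ((integrable_gauss (d := d) (half_pos hb)).const_mul (2 + 4 / b))
  · exact (cont_poly.mul cont_gaussw).aestronglyMeasurable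
  · filter_upwards with u
    rw [Real.norm_eq_abs, abs_of_nonneg (by positivity)]
    have := poly_gauss_pointwise (t := ‖u‖) (norm_nonneg u) hb
    calc (1 + ‖u‖ + ‖u‖ ^ 2) * Real.exp (-b * ‖u‖ ^ 2)
        ≤ (2 + 4 / b) * Real.exp (-(b / 2) * ‖u‖ ^ 2) := this
      _ = (2 + 4 / b) * Real.exp (-(b / 2) * ‖u‖ ^ 2) := rfl

lemma integrable_poly_gauss_one :
    Integrable (fun u : Vec d => (1 + ‖u‖ + ‖u‖ ^ 2) * Real.exp (-‖u‖ ^ 2)) := by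
  simpa using integrable_poly_gauss (d := d) one_pos

lemma integrable_dom {E : Type*} [NormedAddCommGroup E] {g : Vec d → E}
    (hg : AEStronglyMeasurable g (volume : Measure (Vec d))) {C : ℝ}
    (hC : ∀ u, ‖g u‖ ≤ C * ((1 + ‖u‖ + ‖u‖ ^ 2) * Real.exp (-‖u‖ ^ 2))) :
    Integrable g := by
  apply Integrable.mono' ((integrable_poly_gauss_one (d := d)).const_mul C) hg
  filter_upwards with u using hC u

lemma integrable_sq_gauss {b : ℝ} (hb : 0 < b) :
    Integrable (fun u : Vec d => ‖u‖ ^ 2 * Real.exp (-b * ‖u‖ ^ 2)) := by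
  apply Integrable.mono' (integrable_poly_gauss (d := d) hb)
  · exact ((continuous_norm.pow 2).mul cont_gaussw).aestronglyMeasurable
  · filter_upwards with u
    rw [Real.norm_eq_abs, abs_of_nonneg (by positivity)]
    have h1 : (0:ℝ) ≤ Real.exp (-b * ‖u‖ ^ 2) := Real.exp_nonneg _
    nlinarith [norm_nonneg u]

lemma integrable_norm_gauss :
    Integrable (fun u : Vec d => ‖u‖ * Real.exp (-‖u‖ ^ 2)) := by
  apply integrable_dom (C := 1)
  · exact (continuous_norm.mul cont_gaussw_one).aestronglyMeasurable
  · intro u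
    rw [Real.norm_eq_abs, abs_of_nonneg (by positivity)]
    have h1 : (0:ℝ) ≤ Real.exp (-‖u‖ ^ 2) := Real.exp_nonneg _
    nlinarith [norm_nonneg u, sq_nonneg ‖u‖]



variable {d : ℕ}

lemma integral_sq_gauss_eq :
    ∫ u : Vec d, ‖u‖ ^ 2 * Real.exp (-‖u‖ ^ 2) = ((d : ℝ) / 2) * Real.pi ^ ((d : ℝ) / 2) := by
  have key := hasDerivAt_integral_of_dominated_loc_of_deriv_le (μ := (volume : Measure (Vec d)))
      (𝕜 := ℝ) (F := fun b (u : Vec d) => Real.exp (-b * ‖u‖ ^ 2))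
      (F' := fun b (u : Vec d) => -(‖u‖ ^ 2 * Real.exp (-b * ‖u‖ ^ 2)))
      (x₀ := 1) (s := Metric.ball (1:ℝ) (1/2))
      (bound := fun u : Vec d => ‖u‖ ^ 2 * Real.exp (-(1/2) * ‖u‖ ^ 2))
      (Metric.ball_mem_nhds _ (by norm_num))
      (by filter_upwards with b using cont_gaussw.aestronglyMeasurable)
      (by simpa using integrable_gauss (d := d) one_pos)
      (((continuous_norm.pow 2).mul cont_gaussw).neg.aestronglyMeasurable)
      (by
        filter_upwards with u
        intro b hb
        rw [Metric.mem_ball, Real.dist_eq] at hb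
        have hb2 : (1:ℝ)/2 ≤ b := by cases abs_lt.mp hb; linarith
        rw [Real.norm_eq_abs, abs_neg, abs_of_nonneg (by positivity)]
        have : Real.exp (-b * ‖u‖ ^ 2) ≤ Real.exp (-(1/2) * ‖u‖ ^ 2) := by
          apply Real.exp_le_exp.2
          nlinarith [sq_nonneg ‖u‖]
        nlinarith [sq_nonneg ‖u‖, Real.exp_nonneg (-b * ‖u‖ ^ 2)])
      (integrable_sq_gauss (by norm_num))
      (by
        filter_upwards with u
        intro b hb
        have h1 : HasDerivAt (fun b : ℝ => -b * ‖u‖ ^ 2) (-‖u‖ ^ 2) b := by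
          simpa using ((hasDerivAt_id b).neg.mul_const (‖u‖ ^ 2))
        have := h1.exp
        refine this.congr_deriv ?_
        ring)
  obtain ⟨-, hderiv⟩ := key
  have heq : (fun b : ℝ => ∫ u : Vec d, Real.exp (-b * ‖u‖ ^ 2)) =ᶠ[nhds 1]
      (fun b : ℝ => (Real.pi / b) ^ ((d : ℝ) / 2)) := by
    filter_upwards [eventually_gt_nhds (show (1:ℝ)/2 < 1 by norm_num)] with b hb
    have h := GaussianFourier.integral_rexp_neg_mul_sq_norm (V := Vec d) (b := b) (by linarith)
    simpa [finrank_euclideanSpace_fin] using h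
  have hg : HasDerivAt (fun b : ℝ => (Real.pi / b) ^ ((d : ℝ) / 2))
      (-(((d : ℝ) / 2) * Real.pi ^ ((d : ℝ) / 2))) 1 := by
    have h1 : HasDerivAt (fun b : ℝ => Real.pi / b) (-Real.pi) 1 := by
      have := (hasDerivAt_inv (one_ne_zero)).const_mul Real.pi
      simp only [div_eq_mul_inv]
      simpa using this
    have h2 : HasDerivAt (fun y : ℝ => y ^ ((d : ℝ) / 2))
        (((d : ℝ) / 2) * Real.pi ^ ((d : ℝ) / 2 - 1)) (Real.pi / 1) := by
      rw [div_one]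
      exact Real.hasDerivAt_rpow_const (Or.inl Real.pi_ne_zero)
    have h3 := h2.comp 1 h1
    refine h3.congr_deriv ?_
    rw [Real.rpow_sub Real.pi_pos, Real.rpow_one]
    field_simp
  have hderiv' := (Filter.EventuallyEq.hasDerivAt_iff heq).2 hg
  have huniq := hderiv.unique hderiv'
  have : ∫ u : Vec d, -(‖u‖ ^ 2 * Real.exp (-1 * ‖u‖ ^ 2)) =
      -(∫ u : Vec d, ‖u‖ ^ 2 * Real.exp (-1 * ‖u‖ ^ 2)) := integral_neg _
  rw [this] at huniq
  have h4 : ∫ u : Vec d, ‖u‖ ^ 2 * Real.exp (-1 * ‖u‖ ^ 2) =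
      ((d : ℝ) / 2) * Real.pi ^ ((d : ℝ) / 2) := by linarith
  simpa using h4

lemma integral_norm_gauss_le (hd : 1 ≤ d) :
    ∫ u : Vec d, ‖u‖ * Real.exp (-‖u‖ ^ 2) ≤
      Real.sqrt ((d : ℝ) / 2) * Real.pi ^ ((d : ℝ) / 2) := by
  set a := Real.sqrt ((d : ℝ) / 2) with ha
  have hd2 : (0:ℝ) < (d : ℝ) / 2 := by
    have : (1:ℝ) ≤ (d:ℝ) := by exact_mod_cast hd
    linarith
  have ha0 : 0 < a := Real.sqrt_pos.2 hd2
  have hasq : a ^ 2 = (d : ℝ) / 2 := Real.sq_sqrt hd2.le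
  have hpt : ∀ u : Vec d, ‖u‖ * Real.exp (-‖u‖ ^ 2) ≤
      (a/2) * Real.exp (-‖u‖ ^ 2) + (1/(2*a)) * (‖u‖ ^ 2 * Real.exp (-‖u‖ ^ 2)) := by
    intro u
    have h1 : (0:ℝ) ≤ Real.exp (-‖u‖ ^ 2) := Real.exp_nonneg _
    have h2 : ‖u‖ ≤ a/2 + ‖u‖^2/(2*a) := by
      have h3 := sq_nonneg (a - ‖u‖)
      rw [div_add_div _ _ (by norm_num) (by positivity), le_div_iff₀ (by positivity)]
      nlinarith
    calc ‖u‖ * Real.exp (-‖u‖ ^ 2) ≤ (a/2 + ‖u‖^2/(2*a)) * Real.exp (-‖u‖ ^ 2) :=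
          mul_le_mul_of_nonneg_right h2 h1
      _ = (a/2) * Real.exp (-‖u‖ ^ 2) + (1/(2*a)) * (‖u‖ ^ 2 * Real.exp (-‖u‖ ^ 2)) := by
          field_simp
  have hint1 : Integrable (fun u : Vec d => (a/2) * Real.exp (-‖u‖ ^ 2) +
      (1/(2*a)) * (‖u‖ ^ 2 * Real.exp (-‖u‖ ^ 2))) := by
    apply Integrable.add (integrable_gauss_one.const_mul _)
    apply Integrable.const_mul
    simpa using integrable_sq_gauss (d := d) one_pos
  have hle := integral_mono (integrable_norm_gauss (d := d)) hint1 hpt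
  have hsq : ∫ u : Vec d, ‖u‖ ^ 2 * Real.exp (-‖u‖ ^ 2) =
      ((d : ℝ) / 2) * Real.pi ^ ((d : ℝ) / 2) := integral_sq_gauss_eq
  rw [integral_add (integrable_gauss_one.const_mul _)
      (Integrable.const_mul (by simpa using integrable_sq_gauss (d := d) one_pos) _),
    integral_const_mul, integral_const_mul, integral_gauss, hsq] at hle
  calc ∫ u : Vec d, ‖u‖ * Real.exp (-‖u‖ ^ 2)
      ≤ a / 2 * Real.pi ^ ((d : ℝ) / 2) +
        1 / (2 * a) * (((d : ℝ) / 2) * Real.pi ^ ((d : ℝ) / 2)) := hle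
    _ = a * Real.pi ^ ((d : ℝ) / 2) := by
        rw [← hasq]; field_simp; ring


variable {d : ℕ}

lemma fderiv_apply_inner (f : Vec d → ℝ) (x v : Vec d) :
    fderiv ℝ f x v = ⟪gradient f x, v⟫ := by
  conv_lhs => rw [show fderiv ℝ f x = (InnerProductSpace.toDual ℝ (Vec d)) (gradient f x) from
    ((InnerProductSpace.toDual ℝ (Vec d)).apply_symm_apply _).symm]
  exact InnerProductSpace.toDual_apply_apply

lemma norm_fderiv_eq (f : Vec d → ℝ) (x : Vec d) :
    ‖fderiv ℝ f x‖ = ‖gradient f x‖ := by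
  rw [show gradient f x = (InnerProductSpace.toDual ℝ (Vec d)).symm (fderiv ℝ f x) from rfl]
  exact (LinearIsometryEquiv.norm_map _ _).symm

lemma gradient_neg (f : Vec d → ℝ) (x : Vec d) :
    gradient (fun y => -f y) x = -gradient f x := by
  rw [show gradient (fun y => -f y) x =
      (InnerProductSpace.toDual ℝ (Vec d)).symm (fderiv ℝ (fun y => -f y) x) from rfl,
    show gradient f x = (InnerProductSpace.toDual ℝ (Vec d)).symm (fderiv ℝ f x) from rfl]
  rw [fderiv_fun_neg, map_neg]

lemma descent {f : Vec d → ℝ} {L : ℝ} (hdiff : Differentiable ℝ f)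
    (hL : ∀ a b : Vec d, ‖gradient f a - gradient f b‖ ≤ L * ‖a - b‖) (x v : Vec d) :
    f (x + v) ≤ f x + ⟪gradient f x, v⟫ + L / 2 * ‖v‖ ^ 2 := by
  set c1 := ⟪gradient f x, v⟫ with hc1
  set c2 := L / 2 * ‖v‖ ^ 2 with hc2
  have hline : ∀ t : ℝ, HasDerivAt (fun t : ℝ => x + t • v) v t := by
    intro t
    simpa using ((hasDerivAt_id t).smul_const v).const_add x
  have hφ : ∀ t : ℝ, HasDerivAt (fun t : ℝ => f (x + t • v) - t * c1 - t ^ 2 * c2)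
      (⟪gradient f (x + t • v), v⟫ - c1 - 2 * t * c2) t := by
    intro t
    have h1 : HasDerivAt (fun t : ℝ => f (x + t • v)) (fderiv ℝ f (x + t • v) v) t :=
      (hdiff _).hasFDerivAt.comp_hasDerivAt t (hline t)
    rw [fderiv_apply_inner] at h1
    have h2 : HasDerivAt (fun t : ℝ => t * c1) c1 t := by
      simpa using (hasDerivAt_id t).mul_const c1
    have h3 : HasDerivAt (fun t : ℝ => t ^ 2 * c2) (2 * t * c2) t := by
      have := (hasDerivAt_pow 2 t).mul_const c2
      simpa [mul_comm] using this
    exact (h1.sub h2).sub h3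
  have mono : AntitoneOn (fun t : ℝ => f (x + t • v) - t * c1 - t ^ 2 * c2) (Set.Icc 0 1) := by
    apply antitoneOn_of_deriv_nonpos (convex_Icc 0 1)
    · apply Continuous.continuousOn
      have : Continuous fun t : ℝ => x + t • v :=
        continuous_const.add (continuous_id.smul continuous_const)
      exact ((hdiff.continuous.comp this).sub (continuous_id.mul continuous_const)).sub
        ((continuous_pow 2).mul continuous_const)
    · intro t ht
      exact ((hφ t).differentiableAt).differentiableWithinAt
    · intro t ht
      rw [interior_Icc, Set.mem_Ioo] at ht
      rw [(hφ t).deriv]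
      have e1 : ⟪gradient f (x + t • v), v⟫ - c1 = ⟪gradient f (x + t • v) - gradient f x, v⟫ := by
        rw [inner_sub_left]
      have e2 : ⟪gradient f (x + t • v) - gradient f x, v⟫ ≤
          ‖gradient f (x + t • v) - gradient f x‖ * ‖v‖ := real_inner_le_norm _ _
      have e3 : ‖gradient f (x + t • v) - gradient f x‖ ≤ L * (t * ‖v‖) := by
        have := hL (x + t • v) x
        simpa [norm_smul, abs_of_pos ht.1] using this
      have hv : ‖v‖ * ‖v‖ = ‖v‖ ^ 2 := (sq ‖v‖).symm
      have ht0 : 0 < t := ht.1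
      nlinarith [norm_nonneg v, mul_le_mul_of_nonneg_right e3 (norm_nonneg v)]
  have h01 : (0:ℝ) ∈ Set.Icc (0:ℝ) 1 := by constructor <;> norm_num
  have h11 : (1:ℝ) ∈ Set.Icc (0:ℝ) 1 := by constructor <;> norm_num
  have := mono h01 h11 zero_le_one
  simp only [one_smul, zero_smul, add_zero, one_pow, one_mul, zero_mul, sub_zero,
    zero_pow, mul_zero] at this
  · linarith


variable {d : ℕ}

lemma mApp_cont (S : Matrix (Fin d) (Fin d) ℝ) : Continuous (mApp S) := by
  have : mApp S = ⇑(LinearMap.toContinuousLinearMap (Matrix.toEuclideanLin S)) := by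
    funext u; rw [LinearMap.coe_toContinuousLinearMap']; rfl
  rw [this]
  exact (LinearMap.toContinuousLinearMap (Matrix.toEuclideanLin S)).continuous

lemma mApp_norm_le (S : Matrix (Fin d) (Fin d) ℝ) (u : Vec d) :
    ‖mApp S u‖ ≤ opNorm S * ‖u‖ := by
  have h := (LinearMap.toContinuousLinearMap (Matrix.toEuclideanLin S)).le_opNorm u
  rw [show (LinearMap.toContinuousLinearMap (Matrix.toEuclideanLin S)) u = mApp S u from by
    rw [LinearMap.coe_toContinuousLinearMap']; rfl] at h
  exact h

lemma descent_lower {f : Vec d → ℝ} {L : ℝ} (hdiff : Differentiable ℝ f)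
    (hL : ∀ a b : Vec d, ‖gradient f a - gradient f b‖ ≤ L * ‖a - b‖) (x v : Vec d) :
    f x + ⟪gradient f x, v⟫ - L / 2 * ‖v‖ ^ 2 ≤ f (x + v) := by
  have hLn : ∀ a b : Vec d, ‖gradient (fun y => -f y) a - gradient (fun y => -f y) b‖ ≤
      L * ‖a - b‖ := by
    intro a b
    rw [gradient_neg, gradient_neg, show -gradient f a - -gradient f b = -(gradient f a - gradient f b) by abel, norm_neg]
    exact hL a b
  have h := descent (f := fun y => -f y) hdiff.neg hLn x v
  rw [gradient_neg] at h
  simp only [inner_neg_left] at h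
  linarith

lemma abs_growth {f : Vec d → ℝ} {L : ℝ} (hdiff : Differentiable ℝ f)
    (hL : ∀ a b : Vec d, ‖gradient f a - gradient f b‖ ≤ L * ‖a - b‖) (x₀ y : Vec d) :
    |f y| ≤ |f x₀| + ‖gradient f x₀‖ * ‖y - x₀‖ + L / 2 * ‖y - x₀‖ ^ 2 := by
  have h1 := descent hdiff hL x₀ (y - x₀)
  have h2 := descent_lower hdiff hL x₀ (y - x₀)
  rw [add_sub_cancel] at h1 h2
  have h3 : |⟪gradient f x₀, y - x₀⟫| ≤ ‖gradient f x₀‖ * ‖y - x₀‖ := abs_real_inner_le_norm _ _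
  rw [abs_le] at h3 ⊢
  constructor
  · have := neg_abs_le (f x₀); nlinarith [h3.1]
  · have := le_abs_self (f x₀); nlinarith [h3.2]

lemma grad_norm_le {f : Vec d → ℝ} {L : ℝ}
    (hL : ∀ a b : Vec d, ‖gradient f a - gradient f b‖ ≤ L * ‖a - b‖) (x₀ y : Vec d) :
    ‖gradient f y‖ ≤ ‖gradient f x₀‖ + L * ‖y - x₀‖ := by
  have h1 := norm_sub_norm_le (gradient f y) (gradient f x₀)
  have := hL y x₀
  linarith

section smoothing

variable {f : Vec d → ℝ} {L : ℝ} (hdiff : Differentiable ℝ f)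
  (hL : ∀ a b : Vec d, ‖gradient f a - gradient f b‖ ≤ L * ‖a - b‖) (hL0 : 0 ≤ L)
  (S : Matrix (Fin d) (Fin d) ℝ)

include hdiff hL hL0

lemma cont_gradient : Continuous (gradient f) := by
  have : LipschitzWith (Real.toNNReal L) (gradient f) := by
    apply LipschitzWith.of_dist_le_mul
    intro a b
    rw [dist_eq_norm, dist_eq_norm]
    exact (hL a b).trans (mul_le_mul_of_nonneg_right (Real.le_coe_toNNReal L) (norm_nonneg _))
  exact this.continuous

lemma cont_fderiv : Continuous (fun y : Vec d => fderiv ℝ f y) := by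
  have h : (fun y : Vec d => fderiv ℝ f y) =
      fun y => (InnerProductSpace.toDual ℝ (Vec d)) (gradient f y) := by
    funext y
    exact ((InnerProductSpace.toDual ℝ (Vec d)).apply_symm_apply _).symm
  rw [h]
  exact (InnerProductSpace.toDual ℝ (Vec d)).continuous.comp (cont_gradient hdiff hL hL0)

lemma integrable_wgrad (x : Vec d) :
    Integrable (fun u : Vec d => Real.exp (-‖u‖ ^ 2) • gradient f (x + mApp S u)) := by
  apply integrable_dom (C := ‖gradient f x‖ + L * opNorm S)
  · exact (cont_gaussw_one.smul ((cont_gradient hdiff hL hL0).comp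
      (continuous_const.add (mApp_cont S)))).aestronglyMeasurable
  · intro u
    rw [norm_smul, Real.norm_eq_abs, Real.abs_exp]
    have h1 : ‖gradient f (x + mApp S u)‖ ≤ ‖gradient f x‖ + L * (opNorm S * ‖u‖) := by
      have h2 := grad_norm_le hL x (x + mApp S u)
      rw [add_sub_cancel_left] at h2
      exact h2.trans (by nlinarith [mApp_norm_le S u, norm_nonneg (mApp S u), norm_nonneg u])
    have hw : (0:ℝ) ≤ Real.exp (-‖u‖ ^ 2) := Real.exp_nonneg _
    have hM : (0:ℝ) ≤ opNorm S := norm_nonneg _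
    have hg0 : (0:ℝ) ≤ ‖gradient f x‖ := norm_nonneg _
    have hu : (0:ℝ) ≤ ‖u‖ := norm_nonneg u
    calc Real.exp (-‖u‖ ^ 2) * ‖gradient f (x + mApp S u)‖
        ≤ Real.exp (-‖u‖ ^ 2) * (‖gradient f x‖ + L * (opNorm S * ‖u‖)) :=
          mul_le_mul_of_nonneg_left h1 hw
      _ ≤ Real.exp (-‖u‖ ^ 2) * ((‖gradient f x‖ + L * opNorm S) * (1 + ‖u‖ + ‖u‖ ^ 2)) := by
          apply mul_le_mul_of_nonneg_left _ hw
          nlinarith [mul_nonneg hg0 hu, mul_nonneg hg0 (sq_nonneg ‖u‖),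
            mul_nonneg (mul_nonneg hL0 hM) (sq_nonneg ‖u‖), mul_nonneg hL0 hM]
      _ = (‖gradient f x‖ + L * opNorm S) * ((1 + ‖u‖ + ‖u‖ ^ 2) * Real.exp (-‖u‖ ^ 2)) := by
          ring

lemma hasGradientAt_gsmooth (x₀ : Vec d) :
    HasGradientAt (gsmooth f S)
      ((Real.pi ^ ((d : ℝ) / 2))⁻¹ •
        ∫ u : Vec d, Real.exp (-‖u‖ ^ 2) • gradient f (x₀ + mApp S u)) x₀ := by
  set c : ℝ := Real.pi ^ ((d : ℝ) / 2) with hc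
  set M : ℝ := opNorm S with hMdef
  have hM : (0:ℝ) ≤ M := norm_nonneg _
  have contline : ∀ x : Vec d, Continuous fun u : Vec d => x + mApp S u := fun x =>
    continuous_const.add (mApp_cont S)
  have hw : ∀ u : Vec d, (0:ℝ) ≤ Real.exp (-‖u‖ ^ 2) := fun u => Real.exp_nonneg _
  have hg0 : (0:ℝ) ≤ ‖gradient f x₀‖ := norm_nonneg _
  have h1meas : ∀ x : Vec d, AEStronglyMeasurable
      (fun u : Vec d => f (x + mApp S u) * Real.exp (-‖u‖ ^ 2)) volume := by
    intro x
    exact ((hdiff.continuous.comp (contline x)).mul cont_gaussw_one).aestronglyMeasurable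
  have h2int : Integrable (fun u : Vec d => f (x₀ + mApp S u) * Real.exp (-‖u‖ ^ 2)) := by
    refine integrable_dom (h1meas x₀) (C := |f x₀| + ‖gradient f x₀‖ * M + L / 2 * M ^ 2) ?_
    intro u
    rw [Real.norm_eq_abs, abs_mul, Real.abs_exp]
    have h1 := abs_growth hdiff hL x₀ (x₀ + mApp S u)
    rw [add_sub_cancel_left] at h1
    have h2 := mApp_norm_le S u
    have hu : (0:ℝ) ≤ ‖u‖ := norm_nonneg u
    have hn : (0:ℝ) ≤ ‖mApp S u‖ := norm_nonneg _
    have h3 : |f (x₀ + mApp S u)| ≤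
        (|f x₀| + ‖gradient f x₀‖ * M + L / 2 * M ^ 2) * (1 + ‖u‖ + ‖u‖ ^ 2) := by
      obtain ⟨Cc, hCc⟩ : ∃ Cc : ℝ, Cc = |f x₀| + ‖gradient f x₀‖ * M + L / 2 * M ^ 2 := ⟨_, rfl⟩
      rw [← hCc]
      have e1 : ‖gradient f x₀‖ * ‖mApp S u‖ ≤ (‖gradient f x₀‖ * M) * ‖u‖ := by
        calc ‖gradient f x₀‖ * ‖mApp S u‖ ≤ ‖gradient f x₀‖ * (M * ‖u‖) :=
              mul_le_mul_of_nonneg_left h2 hg0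
          _ = (‖gradient f x₀‖ * M) * ‖u‖ := by ring
      have e2 : L / 2 * ‖mApp S u‖ ^ 2 ≤ (L / 2 * M ^ 2) * ‖u‖ ^ 2 := by
        have hp : ‖mApp S u‖ ^ 2 ≤ (M * ‖u‖) ^ 2 := by nlinarith
        calc L / 2 * ‖mApp S u‖ ^ 2 ≤ L / 2 * (M * ‖u‖) ^ 2 :=
              mul_le_mul_of_nonneg_left hp (by linarith)
          _ = (L / 2 * M ^ 2) * ‖u‖ ^ 2 := by ring
      have hL2 : (0:ℝ) ≤ L / 2 * M ^ 2 := mul_nonneg (by linarith) (sq_nonneg M)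
      have hgM : (0:ℝ) ≤ ‖gradient f x₀‖ * M := mul_nonneg hg0 hM
      have habs : (0:ℝ) ≤ |f x₀| := abs_nonneg _
      have e3 : (‖gradient f x₀‖ * M) * ‖u‖ ≤ Cc * ‖u‖ :=
        mul_le_mul_of_nonneg_right (by rw [hCc]; linarith) hu
      have e4 : (L / 2 * M ^ 2) * ‖u‖ ^ 2 ≤ Cc * ‖u‖ ^ 2 :=
        mul_le_mul_of_nonneg_right (by rw [hCc]; linarith) (sq_nonneg _)
      have e5 : |f x₀| ≤ Cc := by rw [hCc]; linarith
      have hring : Cc * (1 + ‖u‖ + ‖u‖ ^ 2) = Cc + Cc * ‖u‖ + Cc * ‖u‖ ^ 2 := by ring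
      linarith
    calc |f (x₀ + mApp S u)| * Real.exp (-‖u‖ ^ 2)
        ≤ ((|f x₀| + ‖gradient f x₀‖ * M + L / 2 * M ^ 2) * (1 + ‖u‖ + ‖u‖ ^ 2)) *
          Real.exp (-‖u‖ ^ 2) := mul_le_mul_of_nonneg_right h3 (hw u)
      _ = (|f x₀| + ‖gradient f x₀‖ * M + L / 2 * M ^ 2) *
          ((1 + ‖u‖ + ‖u‖ ^ 2) * Real.exp (-‖u‖ ^ 2)) := by ring
  have h3meas : AEStronglyMeasurable
      (fun u : Vec d => Real.exp (-‖u‖ ^ 2) • fderiv ℝ f (x₀ + mApp S u)) volume :=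
    (cont_gaussw_one.smul ((cont_fderiv hdiff hL hL0).comp (contline x₀))).aestronglyMeasurable
  have h4bound : ∀ᵐ u : Vec d ∂volume, ∀ x ∈ Metric.ball x₀ 1,
      ‖Real.exp (-‖u‖ ^ 2) • fderiv ℝ f (x + mApp S u)‖ ≤
      (‖gradient f x₀‖ + L + L * M) * ((1 + ‖u‖ + ‖u‖ ^ 2) * Real.exp (-‖u‖ ^ 2)) := by
    filter_upwards with u
    intro x hx
    rw [Metric.mem_ball, dist_eq_norm] at hx
    rw [norm_smul, Real.norm_eq_abs, Real.abs_exp, norm_fderiv_eq]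
    have h1 : ‖gradient f (x + mApp S u)‖ ≤ ‖gradient f x₀‖ + L * (1 + M * ‖u‖) := by
      have h2 := grad_norm_le hL x₀ (x + mApp S u)
      have h3 : ‖x + mApp S u - x₀‖ ≤ ‖x - x₀‖ + ‖mApp S u‖ := by
        calc ‖x + mApp S u - x₀‖ = ‖(x - x₀) + mApp S u‖ := by
              congr 1; abel
          _ ≤ _ := norm_add_le _ _
      have h4 := mApp_norm_le S u
      nlinarith [norm_nonneg (mApp S u), norm_nonneg u, hx.le]
    have hu : (0:ℝ) ≤ ‖u‖ := norm_nonneg u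
    calc Real.exp (-‖u‖ ^ 2) * ‖gradient f (x + mApp S u)‖
        ≤ Real.exp (-‖u‖ ^ 2) * ((‖gradient f x₀‖ + L + L * M) * (1 + ‖u‖ + ‖u‖ ^ 2)) := by
          apply mul_le_mul_of_nonneg_left _ (hw u)
          nlinarith [mul_nonneg hg0 hu, mul_nonneg hg0 (sq_nonneg ‖u‖),
            mul_nonneg hL0 hu, mul_nonneg hL0 (sq_nonneg ‖u‖), mul_nonneg hL0 hM,
            mul_nonneg (mul_nonneg hL0 hM) (sq_nonneg ‖u‖)]
      _ = (‖gradient f x₀‖ + L + L * M) * ((1 + ‖u‖ + ‖u‖ ^ 2) * Real.exp (-‖u‖ ^ 2)) := by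
          ring
  have h5int : Integrable (fun u : Vec d =>
      (‖gradient f x₀‖ + L + L * M) * ((1 + ‖u‖ + ‖u‖ ^ 2) * Real.exp (-‖u‖ ^ 2))) :=
    integrable_poly_gauss_one.const_mul _
  have h6diff : ∀ᵐ u : Vec d ∂volume, ∀ x ∈ Metric.ball x₀ 1,
      HasFDerivAt (fun x : Vec d => f (x + mApp S u) * Real.exp (-‖u‖ ^ 2))
        (Real.exp (-‖u‖ ^ 2) • fderiv ℝ f (x + mApp S u)) x := by
    filter_upwards with u
    intro x _
    have h1 : HasFDerivAt (fun x : Vec d => x + mApp S u)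
        (ContinuousLinearMap.id ℝ (Vec d)) x := (hasFDerivAt_id x).add_const _
    have h2 := (hdiff (x + mApp S u)).hasFDerivAt.comp x h1
    rw [ContinuousLinearMap.comp_id] at h2
    exact h2.mul_const _
  have key : HasFDerivAt
      (fun x : Vec d => ∫ u : Vec d, f (x + mApp S u) * Real.exp (-‖u‖ ^ 2))
      (∫ u : Vec d, Real.exp (-‖u‖ ^ 2) • fderiv ℝ f (x₀ + mApp S u)) x₀ :=
    hasFDerivAt_integral_of_dominated_of_fderiv_le (Metric.ball_mem_nhds x₀ one_pos)
      (Filter.Eventually.of_forall h1meas) h2int h3meas h4bound h5int h6diff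
  have hFi' : Integrable (fun u : Vec d => Real.exp (-‖u‖ ^ 2) • fderiv ℝ f (x₀ + mApp S u)) := by
    refine integrable_dom h3meas (C := ‖gradient f x₀‖ + L * M) ?_
    intro u
    rw [norm_smul, Real.norm_eq_abs, Real.abs_exp, norm_fderiv_eq]
    have h1 : ‖gradient f (x₀ + mApp S u)‖ ≤ ‖gradient f x₀‖ + L * (M * ‖u‖) := by
      have h2 := grad_norm_le hL x₀ (x₀ + mApp S u)
      rw [add_sub_cancel_left] at h2
      exact h2.trans (by nlinarith [mApp_norm_le S u, norm_nonneg (mApp S u), norm_nonneg u])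
    have hu : (0:ℝ) ≤ ‖u‖ := norm_nonneg u
    calc Real.exp (-‖u‖ ^ 2) * ‖gradient f (x₀ + mApp S u)‖
        ≤ Real.exp (-‖u‖ ^ 2) * ((‖gradient f x₀‖ + L * M) * (1 + ‖u‖ + ‖u‖ ^ 2)) := by
          apply mul_le_mul_of_nonneg_left _ (hw u)
          nlinarith [mul_nonneg hg0 hu, mul_nonneg hg0 (sq_nonneg ‖u‖),
            mul_nonneg (mul_nonneg hL0 hM) (sq_nonneg ‖u‖), mul_nonneg hL0 hM]
      _ = (‖gradient f x₀‖ + L * M) * ((1 + ‖u‖ + ‖u‖ ^ 2) * Real.exp (-‖u‖ ^ 2)) := by ring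
  have hint := integrable_wgrad hdiff hL hL0 S x₀
  have heq : (∫ u : Vec d, Real.exp (-‖u‖ ^ 2) • fderiv ℝ f (x₀ + mApp S u)) =
      (InnerProductSpace.toDual ℝ (Vec d))
      (∫ u : Vec d, Real.exp (-‖u‖ ^ 2) • gradient f (x₀ + mApp S u)) := by
    apply ContinuousLinearMap.ext
    intro v
    rw [ContinuousLinearMap.integral_apply hFi', InnerProductSpace.toDual_apply_apply]
    rw [real_inner_comm, ← integral_inner hint v]
    congr 1
    funext u
    rw [ContinuousLinearMap.smul_apply, fderiv_apply_inner, real_inner_smul_right,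
      real_inner_comm]
    simp
  have hkey2 : HasFDerivAt (gsmooth f S)
      (c⁻¹ • ∫ u : Vec d, Real.exp (-‖u‖ ^ 2) • fderiv ℝ f (x₀ + mApp S u)) x₀ := by
    have h := key.const_mul c⁻¹
    exact h
  rw [heq] at hkey2
  have hsm : c⁻¹ • (InnerProductSpace.toDual ℝ (Vec d))
        (∫ u : Vec d, Real.exp (-‖u‖ ^ 2) • gradient f (x₀ + mApp S u)) =
      (InnerProductSpace.toDual ℝ (Vec d))
      (c⁻¹ • ∫ u : Vec d, Real.exp (-‖u‖ ^ 2) • gradient f (x₀ + mApp S u)) := by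
    apply ContinuousLinearMap.ext
    intro v
    rw [ContinuousLinearMap.smul_apply, InnerProductSpace.toDual_apply_apply,
      InnerProductSpace.toDual_apply_apply, real_inner_smul_left]
    simp
  rw [hsm] at hkey2
  exact hasGradientAt_iff_hasFDerivAt.2 hkey2

lemma grad_bias (hd : 1 ≤ d) (x : Vec d) :
    ‖gradient (gsmooth f S) x - gradient f x‖ ≤ L * opNorm S * Real.sqrt ((d : ℝ) / 2) := by
  set c : ℝ := Real.pi ^ ((d : ℝ) / 2) with hcdef
  have hc : 0 < c := Real.rpow_pos_of_pos Real.pi_pos _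
  set M : ℝ := opNorm S with hMdef
  have hM : (0:ℝ) ≤ M := norm_nonneg _
  have hmain := (hasGradientAt_gsmooth hdiff hL hL0 S x).gradient
  have hint := integrable_wgrad hdiff hL hL0 S x
  have hconst : gradient f x = c⁻¹ • ∫ u : Vec d, Real.exp (-‖u‖ ^ 2) • gradient f x := by
    rw [integral_smul_const, integral_gauss, ← hcdef, smul_smul, inv_mul_cancel₀ hc.ne', one_smul]
  rw [hmain, hconst, ← smul_sub,
    ← integral_sub hint (integrable_gauss_one.smul_const (gradient f x))]
  have hinteq : ∀ u : Vec d, Real.exp (-‖u‖ ^ 2) • gradient f (x + mApp S u) -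
      Real.exp (-‖u‖ ^ 2) • gradient f x =
      Real.exp (-‖u‖ ^ 2) • (gradient f (x + mApp S u) - gradient f x) := fun u =>
    (smul_sub _ _ _).symm
  rw [norm_smul, Real.norm_eq_abs, abs_of_pos (by positivity : (0:ℝ) < c⁻¹)]
  have hbound : ‖∫ u : Vec d, (Real.exp (-‖u‖ ^ 2) • gradient f (x + mApp S u) -
      Real.exp (-‖u‖ ^ 2) • gradient f x)‖ ≤
      ∫ u : Vec d, (L * M) * (‖u‖ * Real.exp (-‖u‖ ^ 2)) := by
    apply norm_integral_le_of_norm_le (integrable_norm_gauss.const_mul _)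
    filter_upwards with u
    rw [hinteq u, norm_smul, Real.norm_eq_abs, Real.abs_exp]
    have h1 : ‖gradient f (x + mApp S u) - gradient f x‖ ≤ L * (M * ‖u‖) := by
      have h2 := hL (x + mApp S u) x
      rw [add_sub_cancel_left] at h2
      exact h2.trans (by nlinarith [mApp_norm_le S u, norm_nonneg (mApp S u), norm_nonneg u])
    have hw : (0:ℝ) ≤ Real.exp (-‖u‖ ^ 2) := Real.exp_nonneg _
    calc Real.exp (-‖u‖ ^ 2) * ‖gradient f (x + mApp S u) - gradient f x‖
        ≤ Real.exp (-‖u‖ ^ 2) * (L * (M * ‖u‖)) := mul_le_mul_of_nonneg_left h1 hw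
      _ = (L * M) * (‖u‖ * Real.exp (-‖u‖ ^ 2)) := by ring
  have hLM : (0:ℝ) ≤ L * M := mul_nonneg hL0 hM
  have hval : ∫ u : Vec d, (L * M) * (‖u‖ * Real.exp (-‖u‖ ^ 2)) ≤
      (L * M) * (Real.sqrt ((d : ℝ) / 2) * c) := by
    rw [integral_const_mul]
    exact mul_le_mul_of_nonneg_left (integral_norm_gauss_le hd) hLM
  calc c⁻¹ * ‖∫ u : Vec d, (Real.exp (-‖u‖ ^ 2) • gradient f (x + mApp S u) -
      Real.exp (-‖u‖ ^ 2) • gradient f x)‖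
      ≤ c⁻¹ * ((L * M) * (Real.sqrt ((d : ℝ) / 2) * c)) := by
        apply mul_le_mul_of_nonneg_left _ (by positivity)
        exact hbound.trans hval
    _ = L * M * Real.sqrt ((d : ℝ) / 2) := by field_simp

end smoothing


variable {d : ℕ}

lemma nontrivial_vec (hd : 1 ≤ d) : Nontrivial (Vec d) := by
  refine ⟨EuclideanSpace.single (⟨0, hd⟩ : Fin d) (1:ℝ), 0, fun h => ?_⟩
  have := congrArg (fun z : Vec d => z ⟨0, hd⟩) h
  simp [EuclideanSpace.single_apply] at this

lemma pl_bound {f : Vec d → ℝ} {L : ℝ} (hdiff : Differentiable ℝ f)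
    (hL : ∀ a b : Vec d, ‖gradient f a - gradient f b‖ ≤ L * ‖a - b‖) (hLpos : 0 < L)
    {fstar : ℝ} (hlb : ∀ y : Vec d, fstar ≤ f y) (x : Vec d) :
    ‖gradient f x‖ ^ 2 ≤ 2 * L * (f x - fstar) := by
  have h := descent hdiff hL x (-(L⁻¹ • gradient f x))
  have hi : ⟪gradient f x, -(L⁻¹ • gradient f x)⟫ = -(L⁻¹ * ‖gradient f x‖ ^ 2) := by
    rw [inner_neg_right, real_inner_smul_right, real_inner_self_eq_norm_sq]
  have hn : ‖-(L⁻¹ • gradient f x)‖ ^ 2 = L⁻¹ ^ 2 * ‖gradient f x‖ ^ 2 := by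
    rw [norm_neg, norm_smul, Real.norm_eq_abs, abs_of_pos (inv_pos.2 hLpos), mul_pow]
  rw [hi, hn] at h
  have hlb2 := hlb (x + -(L⁻¹ • gradient f x))
  set r := ‖gradient f x‖ ^ 2 with hr
  have hhalf : L⁻¹ * r - L / 2 * (L⁻¹ ^ 2 * r) = r / (2 * L) := by
    field_simp
    ring
  have h5 : r / (2 * L) ≤ f x - fstar := by linarith
  rw [div_le_iff₀ (by positivity)] at h5
  linarith

lemma one_le_opNorm_mul (hd : 1 ≤ d) {S : Matrix (Fin d) (Fin d) ℝ} (hdet : IsUnit S.det) :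
    1 ≤ opNorm S * opNorm S⁻¹ := by
  haveI := nontrivial_vec hd
  obtain ⟨v, hv⟩ := exists_ne (0 : Vec d)
  have hSv : mApp S (mApp S⁻¹ v) = v := by
    show Matrix.toEuclideanLin S (Matrix.toEuclideanLin S⁻¹ v) = v
    rw [Matrix.toEuclideanLin_apply, Matrix.toEuclideanLin_apply]
    simp [Matrix.mulVec_mulVec, Matrix.mul_nonsing_inv _ hdet]
  have h1 : ‖v‖ ≤ opNorm S * (opNorm S⁻¹ * ‖v‖) := by
    calc ‖v‖ = ‖mApp S (mApp S⁻¹ v)‖ := by rw [hSv]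
      _ ≤ opNorm S * ‖mApp S⁻¹ v‖ := mApp_norm_le _ _
      _ ≤ opNorm S * (opNorm S⁻¹ * ‖v‖) :=
          mul_le_mul_of_nonneg_left (mApp_norm_le _ _) (norm_nonneg _)
  have hv0 : 0 < ‖v‖ := norm_pos_iff.2 hv
  nlinarith

lemma budget_le (hd : 1 ≤ d) {M N : ℝ} (hM : 0 ≤ M) (hMN : 1 ≤ M * N) :
    26 * (M ^ 2 * ((d : ℝ) / 2)) ≤ (((6 : ℝ) + d) / 2) ^ 3 * (M ^ 4 * N ^ 2) := by
  have hd1 : (1 : ℝ) ≤ d := by exact_mod_cast hd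
  have h1 : M ^ 2 ≤ M ^ 4 * N ^ 2 := by
    have h0 : (0:ℝ) ≤ M ^ 2 * ((M * N) ^ 2 - 1) :=
      mul_nonneg (sq_nonneg M) (by nlinarith)
    nlinarith
  have hd0 : (0:ℝ) ≤ (d : ℝ) := by positivity
  have h2 : 104 * (d : ℝ) ≤ (6 + d) ^ 3 := by
    nlinarith [pow_nonneg hd0 3, sq_nonneg ((d : ℝ))]
  have h3 : (0:ℝ) ≤ (((6 : ℝ) + d) / 2) ^ 3 := by positivity
  nlinarith [mul_le_mul_of_nonneg_left h1 h3, mul_le_mul_of_nonneg_right h2 (sq_nonneg M)]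


end AGS
open AGS

/-- convergence of AGS-GD for non-convex `L`-smooth functions. -/
theorem stmt_15 {d : ℕ} (f : Vec d → ℝ) (L : ℝ)
    (hdiff : Differentiable ℝ f)
    (hL : ∀ a b : Vec d, ‖gradient f a - gradient f b‖ ≤ L * ‖a - b‖)
    (fstar : ℝ) (hlb : ∀ y : Vec d, fstar ≤ f y) (hat : ∃ y : Vec d, f y = fstar)
    (T : ℕ) (hT : 1 ≤ T)
    (S : ℕ → Matrix (Fin d) (Fin d) ℝ)
    (hS : ∀ t, 1 ≤ t → (S t).IsSymm ∧ IsUnit (S t).det)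
    (lam : ℝ) (hlam : 0 < lam) (hlamL : lam ≤ 1 / L)
    (B : Matrix (Fin d) (Fin d) ℝ → Matrix (Fin d) (Fin d) ℝ → ℝ)
    (hB : ∀ A A' (x : Vec d), |gsmooth f A x - gsmooth f A' x| ≤ B A A')
    (x : ℕ → Vec d)
    (hrec : ∀ t < T, x (t + 1) = x t - lam • gradient (gsmooth f (S (t + 1))) (x t)) :
    ((Finset.Icc 1 T).inf' (Finset.nonempty_Icc.mpr hT)
        fun t => ‖gradient f (x t)‖ ^ 2) ≤
      4 / ((T : ℝ) * lam) * (f (x 0) - fstar) +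
      L ^ 2 / (T : ℝ) * (((6 : ℝ) + d) / 2) ^ 3 *
        ∑ t ∈ Finset.Icc 1 T, opNorm (S t) ^ 4 * opNorm (S t)⁻¹ ^ 2 +
      4 / ((T : ℝ) * lam) * ∑ t ∈ Finset.range (T + 1), B (S (t + 1)) (S t) := by
  have hD : 0 ≤ f (x 0) - fstar := sub_nonneg.2 (hlb _)
  have hBsum : 0 ≤ ∑ t ∈ Finset.range (T + 1), B (S (t + 1)) (S t) :=
    Finset.sum_nonneg fun t _ => le_trans (abs_nonneg _) (hB _ _ (x 0))
  have hTpos : (0:ℝ) < (T:ℝ) := by exact_mod_cast hT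
  have hLpos : 0 < L := by
    rcases le_or_gt L 0 with h | h
    · exfalso
      have : (1:ℝ) / L ≤ 0 := one_div_nonpos.mpr h
      linarith
    · exact h
  have hL0 : 0 ≤ L := hLpos.le
  have hLlam : L * lam ≤ 1 := by
    rw [le_div_iff₀ hLpos] at hlamL
    linarith
  obtain ⟨SUM, hSUM⟩ : ∃ z : ℝ, z = ∑ t ∈ Finset.Icc 1 T, opNorm (S t) ^ 4 * opNorm (S t)⁻¹ ^ 2 :=
    ⟨_, rfl⟩
  rw [← hSUM]
  have hSUMnn : 0 ≤ SUM := by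
    rw [hSUM]
    exact Finset.sum_nonneg fun t _ => by positivity
  have hterm2 : 0 ≤ L ^ 2 / (T : ℝ) * (((6 : ℝ) + d) / 2) ^ 3 * SUM := by positivity
  have hterm3 : 0 ≤ 4 / ((T : ℝ) * lam) * ∑ t ∈ Finset.range (T + 1), B (S (t + 1)) (S t) :=
    mul_nonneg (by positivity) hBsum
  have hterm1 : 0 ≤ 4 / ((T : ℝ) * lam) * (f (x 0) - fstar) := mul_nonneg (by positivity) hD
  obtain ⟨m, hm⟩ : ∃ z : ℝ, z = (Finset.Icc 1 T).inf' (Finset.nonempty_Icc.mpr hT)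
      (fun t => ‖gradient f (x t)‖ ^ 2) := ⟨_, rfl⟩
  rw [← hm]
  by_cases hd : 1 ≤ d
  swap
  · -- d = 0 : trivial
    have hd0 : d = 0 := by omega
    subst hd0
    have hmem1 : 1 ∈ Finset.Icc 1 T := Finset.mem_Icc.2 ⟨le_refl 1, hT⟩
    have h1 : m ≤ ‖gradient f (x 1)‖ ^ 2 := by
      rw [hm]
      exact Finset.inf'_le _ hmem1
    have hz : gradient f (x 1) = 0 := Subsingleton.elim _ _
    rw [hz] at h1
    simp only [norm_zero] at h1
    nlinarith
  -- main case
  haveI := nontrivial_vec hd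
  obtain ⟨Gb, hGbdef⟩ : ∃ z : ℕ → ℝ, z = fun t => L * opNorm (S t) * Real.sqrt ((d:ℝ)/2) :=
    ⟨_, rfl⟩
  have hGb0 : ∀ t, 0 ≤ Gb t := by
    intro t
    rw [hGbdef]
    exact mul_nonneg (mul_nonneg hL0 (norm_nonneg _)) (Real.sqrt_nonneg _)
  have hGbsq : ∀ t, Gb t ^ 2 = L ^ 2 * opNorm (S t) ^ 2 * ((d:ℝ)/2) := by
    intro t
    rw [hGbdef]
    simp only
    rw [mul_pow, mul_pow, Real.sq_sqrt (by positivity : (0:ℝ) ≤ (d:ℝ)/2)]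
  obtain ⟨g, hgdef⟩ : ∃ z : ℕ → Vec d, z = fun t => gradient (gsmooth f (S (t+1))) (x t) :=
    ⟨_, rfl⟩
  have hbias : ∀ (t : ℕ) (y : Vec d), ‖gradient (gsmooth f (S t)) y - gradient f y‖ ≤ Gb t := by
    intro t y
    rw [hGbdef]
    exact grad_bias hdiff hL hL0 (S t) hd y
  -- one-step inequality
  have step : ∀ t, t < T →
      f (x (t+1)) ≤ f (x t) - 3*lam/7 * ‖g t‖^2 + 7*lam/2 * Gb (t+1)^2 := by
    intro t ht
    have hx1 : x (t+1) = x t + (-lam) • g t := by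
      rw [hrec t ht, sub_eq_add_neg, ← neg_smul]
      simp only [hgdef]
    have hdes := descent hdiff hL (x t) ((-lam) • g t)
    rw [← hx1] at hdes
    have hi : ⟪gradient f (x t), (-lam) • g t⟫ = (-lam) * ⟪gradient f (x t), g t⟫ :=
      real_inner_smul_right _ _ _
    have hii := inner_sub_left (𝕜 := ℝ) (gradient f (x t)) (g t) (g t)
    have hgg : ⟪g t, g t⟫ = ‖g t‖^2 := real_inner_self_eq_norm_sq _
    have hcross : |⟪gradient f (x t) - g t, g t⟫| ≤ Gb (t+1) * ‖g t‖ := by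
      refine (abs_real_inner_le_norm _ _).trans ?_
      apply mul_le_mul_of_nonneg_right _ (norm_nonneg _)
      rw [norm_sub_rev]
      simp only [hgdef]
      exact hbias (t+1) (x t)
    have hcross2 : -(Gb (t+1) * ‖g t‖) ≤ ⟪gradient f (x t) - g t, g t⟫ :=
      neg_le_of_abs_le hcross
    have hnorm : ‖(-lam) • g t‖^2 = lam^2 * ‖g t‖^2 := by
      rw [norm_smul, Real.norm_eq_abs, abs_neg, abs_of_pos hlam, mul_pow]
    rw [hi, hnorm] at hdes
    have hYoung : Gb (t+1) * ‖g t‖ ≤ (1/14) * ‖g t‖^2 + (7/2) * Gb (t+1)^2 := by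
      nlinarith [sq_nonneg (7 * Gb (t+1) - ‖g t‖)]
    have h7 : lam * (-(Gb (t+1) * ‖g t‖)) ≤ lam * ⟪gradient f (x t) - g t, g t⟫ :=
      mul_le_mul_of_nonneg_left hcross2 hlam.le
    have h8 : lam * (Gb (t+1) * ‖g t‖) ≤ lam * ((1/14) * ‖g t‖^2 + (7/2) * Gb (t+1)^2) :=
      mul_le_mul_of_nonneg_left hYoung hlam.le
    have hLl : L/2 * (lam^2 * ‖g t‖^2) ≤ lam/2 * ‖g t‖^2 := by
      have h9 : (0:ℝ) ≤ (1 - L*lam) * (lam * ‖g t‖^2) :=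
        mul_nonneg (by linarith) (mul_nonneg hlam.le (sq_nonneg _))
      nlinarith
    have hsub : ⟪gradient f (x t), g t⟫ = ‖g t‖^2 + ⟪gradient f (x t) - g t, g t⟫ := by
      rw [hii, hgg]; ring
    rw [hsub] at hdes
    nlinarith [hdes, h7, h8, hLl]
  -- telescoping
  have tele : ∀ n, n ≤ T → f (x n) + 3*lam/7 * (∑ t ∈ Finset.range n, ‖g t‖^2) ≤
      f (x 0) + 7*lam/2 * (∑ t ∈ Finset.range n, Gb (t+1)^2) := by
    intro n
    induction n with
    | zero => intro _; simp
    | succ k ih =>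
      intro hn
      have h1 := ih (Nat.le_of_succ_le hn)
      have h2 := step k (Nat.lt_of_succ_le hn)
      rw [Finset.sum_range_succ, Finset.sum_range_succ]
      linarith
  obtain ⟨Pg, hPgdef⟩ : ∃ z : ℝ, z = ∑ t ∈ Finset.range T, ‖g t‖^2 := ⟨_, rfl⟩
  obtain ⟨K, hKdef⟩ : ∃ z : ℝ, z = ∑ t ∈ Finset.Icc 1 T, Gb t ^ 2 := ⟨_, rfl⟩
  have hPgnn : 0 ≤ Pg := hPgdef ▸ Finset.sum_nonneg fun t _ => sq_nonneg _
  have hKnn : 0 ≤ K := hKdef ▸ Finset.sum_nonneg fun t _ => sq_nonneg _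
  have hK0K : (∑ t ∈ Finset.range T, Gb (t+1)^2) = K := by
    rw [hKdef, ← Finset.Ico_add_one_right_eq_Icc, Finset.sum_Ico_eq_sum_range]
    exact Finset.sum_congr rfl fun i _ => by rw [add_comm]
  have hPg : 3*lam/7 * Pg ≤ (f (x 0) - fstar) + 7*lam/2 * K := by
    have h1 := tele T le_rfl
    rw [hK0K, ← hPgdef] at h1
    have h2 := hlb (x T)
    linarith
  -- budget
  have hbudget : ∀ t ∈ Finset.Icc 1 T,
      26 * Gb t ^ 2 ≤ L^2 * (((6:ℝ)+d)/2)^3 * (opNorm (S t)^4 * opNorm (S t)⁻¹^2) := by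
    intro t htmem
    rw [Finset.mem_Icc] at htmem
    have hMN := one_le_opNorm_mul hd (hS t htmem.1).2
    rw [hGbsq]
    have hb := budget_le hd (norm_nonneg (LinearMap.toContinuousLinearMap
      (Matrix.toEuclideanLin (S t)))) hMN
    calc 26 * (L^2 * opNorm (S t)^2 * ((d:ℝ)/2))
        = L^2 * (26 * (opNorm (S t)^2 * ((d:ℝ)/2))) := by ring
      _ ≤ L^2 * ((((6:ℝ)+d)/2)^3 * (opNorm (S t)^4 * opNorm (S t)⁻¹^2)) :=
          mul_le_mul_of_nonneg_left hb (sq_nonneg L)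
      _ = L^2 * (((6:ℝ)+d)/2)^3 * (opNorm (S t)^4 * opNorm (S t)⁻¹^2) := by ring
  have hKsum : 26 * K ≤ L^2 * (((6:ℝ)+d)/2)^3 * SUM := by
    rw [hKdef, hSUM, Finset.mul_sum, Finset.mul_sum]
    exact Finset.sum_le_sum hbudget
  rcases le_or_gt T 2 with hT2 | hT3
  · -- T ∈ {1, 2}
    have hmem1 : 1 ∈ Finset.Icc 1 T := Finset.mem_Icc.2 ⟨le_refl 1, hT⟩
    have hm1 : m ≤ ‖gradient f (x 1)‖ ^ 2 := by
      rw [hm]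
      exact Finset.inf'_le _ hmem1
    have hpl := pl_bound hdiff hL hLpos hlb (x 1)
    have hstep0 := step 0 hT
    have hfx1 : f (x 1) ≤ f (x 0) + 7*lam/2 * Gb 1^2 := by
      nlinarith [mul_nonneg hlam.le (sq_nonneg ‖g 0‖)]
    have hTle : (T:ℝ) ≤ 2 := by exact_mod_cast hT2
    have h2L : 2*L*((T:ℝ)*lam) ≤ 4 := by nlinarith [mul_nonneg hL0 hlam.le]
    have h2L' : 2*L ≤ 4/((T:ℝ)*lam) := by
      rw [le_div_iff₀ (by positivity)]
      exact h2L
    have hval : m ≤ 2*L*(f (x 0) - fstar) + 7 * Gb 1^2 := by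
      have h3 : 2*L*(f (x 1) - fstar) ≤ 2*L*(f (x 0) - fstar) + 2*L*(7*lam/2 * Gb 1^2) := by
        nlinarith [mul_nonneg hL0 hD]
      have h4 : 2*L*(7*lam/2 * Gb 1^2) ≤ 7 * Gb 1^2 := by
        nlinarith [sq_nonneg (Gb 1), mul_nonneg hlam.le (sq_nonneg (Gb 1))]
      linarith
    have hGb1 : 7 * Gb 1 ^ 2 ≤ L^2/(T:ℝ) * (((6:ℝ)+d)/2)^3 * SUM := by
      have h26 := hbudget 1 hmem1
      obtain ⟨P1, hP1⟩ : ∃ z : ℝ, z = opNorm (S 1)^4 * opNorm (S 1)⁻¹^2 := ⟨_, rfl⟩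
      obtain ⟨C3, hC3d⟩ : ∃ z : ℝ, z = (((6:ℝ)+d)/2)^3 := ⟨_, rfl⟩
      have hP1nn : 0 ≤ P1 := by
        rw [hP1]
        positivity
      have hC3nn : 0 ≤ C3 := by
        rw [hC3d]
        positivity
      rw [← hP1, ← hC3d] at h26
      have hterm_le : P1 ≤ SUM := by
        rw [hSUM, hP1]
        exact Finset.single_le_sum (f := fun t => opNorm (S t)^4 * opNorm (S t)⁻¹^2)
          (fun i _ => by positivity) hmem1
      rw [← hC3d]
      have hL2 : (0:ℝ) ≤ L^2 := sq_nonneg L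
      have h12 : (1:ℝ)/2 ≤ 1/(T:ℝ) := by
        rw [div_le_div_iff₀ (by norm_num) hTpos]
        linarith
      have hs1 : L^2 * C3 * P1 ≤ L^2 * C3 * SUM :=
        mul_le_mul_of_nonneg_left hterm_le (mul_nonneg hL2 hC3nn)
      have hs2 : (1/2) * (L^2 * C3 * SUM) ≤ (1/(T:ℝ)) * (L^2 * C3 * SUM) :=
        mul_le_mul_of_nonneg_right h12
          (mul_nonneg (mul_nonneg hL2 hC3nn) (by linarith [hSUMnn]))
      have hGbsqnn : (0:ℝ) ≤ Gb 1 ^ 2 := sq_nonneg _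
      have hend : L^2/(T:ℝ) * C3 * SUM = (1/(T:ℝ)) * (L^2 * C3 * SUM) := by ring
      linarith
    have hfinal : 2*L*(f (x 0) - fstar) ≤ 4/((T:ℝ)*lam) * (f (x 0) - fstar) :=
      mul_le_mul_of_nonneg_right h2L' hD
    linarith
  · -- T ≥ 3
    obtain ⟨T', rfl⟩ : ∃ T', T = T' + 1 := ⟨T-1, by omega⟩
    have hT'2 : 2 ≤ T' := by omega
    have hT'R : (2:ℝ) ≤ (T':ℝ) := by exact_mod_cast hT'2
    have hm0 : 0 ≤ m := by
      rw [hm]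
      exact Finset.le_inf' _ _ fun b _ => sq_nonneg _
    have htrans : ∀ t ∈ Finset.Icc 1 T', ‖gradient f (x t)‖^2 ≤
        8/7 * ‖g t‖^2 + 8 * Gb (t+1)^2 := by
      intro t _
      have htr : ‖gradient f (x t)‖ ≤ ‖g t‖ + Gb (t+1) := by
        have h1 : ‖gradient f (x t)‖ ≤ ‖g t‖ + ‖gradient f (x t) - g t‖ := by
          calc ‖gradient f (x t)‖ = ‖g t + (gradient f (x t) - g t)‖ := by rw [add_sub_cancel]
            _ ≤ _ := norm_add_le _ _
        have h2 : ‖gradient f (x t) - g t‖ ≤ Gb (t+1) := by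
          rw [norm_sub_rev]
          simp only [hgdef]
          exact hbias (t+1) (x t)
        linarith
      nlinarith [hGb0 (t+1), norm_nonneg (g t), sq_nonneg (‖g t‖ - 7 * Gb (t+1)),
        norm_nonneg (gradient f (x t))]
    have hsum1 : (T' : ℝ) * m ≤ ∑ t ∈ Finset.Icc 1 T', ‖gradient f (x t)‖^2 := by
      have hcard : (Finset.Icc 1 T').card = T' := by
        rw [Nat.card_Icc]
        omega
      have hle : ∀ i ∈ Finset.Icc 1 T', m ≤ ‖gradient f (x i)‖^2 := by
        intro i hi
        rw [Finset.mem_Icc] at hi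
        rw [hm]
        exact Finset.inf'_le _ (Finset.mem_Icc.2 ⟨hi.1, hi.2.trans (Nat.le_succ T')⟩)
      have := Finset.card_nsmul_le_sum (Finset.Icc 1 T') (fun t => ‖gradient f (x t)‖^2) m hle
      rw [hcard, nsmul_eq_mul] at this
      exact this
    have hsum2 : ∑ t ∈ Finset.Icc 1 T', ‖gradient f (x t)‖^2 ≤
        8/7 * (∑ t ∈ Finset.Icc 1 T', ‖g t‖^2) +
        8 * (∑ t ∈ Finset.Icc 1 T', Gb (t+1)^2) := by
      rw [Finset.mul_sum, Finset.mul_sum, ← Finset.sum_add_distrib]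
      exact Finset.sum_le_sum htrans
    have hsub1 : ∑ t ∈ Finset.Icc 1 T', ‖g t‖^2 ≤ Pg := by
      rw [hPgdef]
      apply Finset.sum_le_sum_of_subset_of_nonneg
      · intro t ht
        rw [Finset.mem_Icc] at ht
        rw [Finset.mem_range]
        omega
      · intro t _ _
        exact sq_nonneg _
    have hsub2 : ∑ t ∈ Finset.Icc 1 T', Gb (t+1)^2 ≤ K := by
      rw [← hK0K]
      apply Finset.sum_le_sum_of_subset_of_nonneg
      · intro t ht
        rw [Finset.mem_Icc] at ht
        rw [Finset.mem_range]
        omega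
      · intro t _ _
        exact sq_nonneg _
    have hA1 : (T' : ℝ) * m ≤ 8/7 * Pg + 8 * K := by linarith only [hsum1, hsum2, hsub1, hsub2]
    have hA2 : lam * Pg ≤ 7/3 * (f (x 0) - fstar) + 49/6 * (lam * K) := by linarith only [hPg]
    have hA3 : lam * ((T':ℝ) * m) ≤ lam * (8/7 * Pg + 8 * K) :=
      mul_le_mul_of_nonneg_left hA1 hlam.le
    have hA4 : (T':ℝ) * lam * m ≤ 8/3 * (f (x 0) - fstar) + 52/3 * (lam * K) := by linarith only [hA3, hA2]
    have hTR : ((T' + 1 : ℕ) : ℝ) = (T' : ℝ) + 1 := by push_cast; ring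
    have hA5 : ((T' + 1 : ℕ) : ℝ) * lam * m ≤ 4 * (f (x 0) - fstar) + 26 * (lam * K) := by
      rw [hTR]
      have h0 : (0:ℝ) ≤ lam * m * ((T':ℝ) - 2) :=
        mul_nonneg (mul_nonneg hlam.le hm0) (by linarith)
      have h1 : ((T':ℝ) + 1) * lam * m ≤ (3/2) * ((T':ℝ) * lam * m) := by linarith only [h0]
      have h2 : 0 ≤ lam * K := mul_nonneg hlam.le hKnn
      linarith only [h1, hA4, h2, hD]
    have hTlampos : (0:ℝ) < ((T' + 1 : ℕ) : ℝ) * lam := by positivity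
    have hA6 : m ≤ (4 * (f (x 0) - fstar) + 26 * (lam * K)) / (((T' + 1 : ℕ) : ℝ) * lam) := by
      rw [le_div_iff₀ hTlampos]
      linarith only [hA5]
    have hA7 : (4 * (f (x 0) - fstar) + 26 * (lam * K)) / (((T' + 1 : ℕ) : ℝ) * lam) =
        4 / (((T' + 1 : ℕ) : ℝ) * lam) * (f (x 0) - fstar) + 26 / ((T' + 1 : ℕ) : ℝ) * K := by
      field_simp
    have h26T : 26 / ((T' + 1 : ℕ) : ℝ) * K ≤
        L^2 / ((T' + 1 : ℕ) : ℝ) * (((6:ℝ)+d)/2)^3 * SUM := by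
      have hTpos' : (0:ℝ) < ((T' + 1 : ℕ) : ℝ) := by positivity
      calc 26 / ((T' + 1 : ℕ) : ℝ) * K = (1/((T' + 1 : ℕ) : ℝ)) * (26 * K) := by ring
        _ ≤ (1/((T' + 1 : ℕ) : ℝ)) * (L^2 * (((6:ℝ)+d)/2)^3 * SUM) :=
            mul_le_mul_of_nonneg_left hKsum (by positivity)
        _ = L^2 / ((T' + 1 : ℕ) : ℝ) * (((6:ℝ)+d)/2)^3 * SUM := by ring
    rw [hA7] at hA6
    linarith

end
end
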